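/- arXiv:2311.08003 — 2 statements merged into one kernel-verified Lean document; each statement's English description precedes it below -/
import Mathlib

section
/- Let (Q,R) be a quadratic monomial presentation, let C be a complete circuit with length l and period r, and let C̄ be a cycle in C. (1) If (−1)^{(l+1)r} = 1 in k, then H_m(k(B⊙Γ)_C) = 0 for all m ∉ {l, l−1}, and H_l(k(B⊙Γ)_C) and H_{l−1}(k(B⊙Γ)_C) are both one-dimensional, spanned respectively by the l-cycle ĥ(C̄) = Σ_{i=0}^{r−1} (−1)^{(l+1)i} (s(rot^i(C̄)), rot^i(C̄)) and by the (l−1)-cycle (l1(C̄), l2(C̄)); moreover ĥ(rot(C̄)) = (−1)^{l+1}·ĥ(C̄), and (l1(rot(C̄)), l2(rot(C̄))) is homologous to (−1)^{l+1}·(l1(C̄), l2(C̄)). (2) If (−1)^{(l+1)r} ≠ 1 in k, then H_m(k(B⊙Γ)_C) = 0 for all m. -/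
/-!
Common framework: quivers, paths (as a start vertex together with a list of
composable arrows, listed in order of traversal, so that the paper's path
`c_m ⋯ c_1` corresponds to the list `[c_1, …, c_m]`), gentle and quadratic
monomial presentations, the cochain complex `k(Γ ∥ B)` and the chain complex
`k(B ⊙ Γ)` of the paper.
-/

namespace GentleTT

structure Quiv where
  V : Type
  A : Type
  [fintV : Fintype V]
  [fintA : Fintype A]
  [decV : DecidableEq V]
  [decA : DecidableEq A]
  src : A → V
  tgt : A → V

attribute [instance] Quiv.fintV Quiv.fintA Quiv.decV Quiv.decA

/-- A "path datum": a start vertex together with the list of arrows traversed. -/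
abbrev PathDat (Q : Quiv) := Q.V × List Q.A

def psrc (Q : Quiv) (p : PathDat Q) : Q.V := p.1

def ptgt (Q : Quiv) (p : PathDat Q) : Q.V := p.2.getLast?.elim p.1 Q.tgt

def plen (Q : Quiv) (p : PathDat Q) : ℕ := p.2.length

/-- `p` is a genuine path: consecutive arrows compose, and the recorded start
vertex is the source of the first arrow (if any). -/
def Ok (Q : Quiv) (p : PathDat Q) : Prop :=
  p.2.Chain' (fun a b => Q.tgt a = Q.src b) ∧ ∀ a ∈ p.2.head?, Q.src a = p.1

/-- `p` is a path none of whose length-2 subpaths lies in `R`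
(an element of the basis `B` of `kQ/⟨R⟩`). -/
def InB (Q : Quiv) (R : Set (Q.A × Q.A)) (p : PathDat Q) : Prop :=
  Ok Q p ∧ p.2.Chain' (fun a b => (a, b) ∉ R)

/-- `p` is a path all of whose length-2 subpaths lie in `R` (an element of `Γ`). -/
def InG (Q : Quiv) (R : Set (Q.A × Q.A)) (p : PathDat Q) : Prop :=
  Ok Q p ∧ p.2.Chain' (fun a b => (a, b) ∈ R)

/-- Parallel paths: same source and same target. -/
def Par (Q : Quiv) (p q : PathDat Q) : Prop :=
  psrc Q p = psrc Q q ∧ ptgt Q p = ptgt Q q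

/-- Antiparallel paths: `s(p) = t(q)` and `t(p) = s(q)`. -/
def AntiPar (Q : Quiv) (p q : PathDat Q) : Prop :=
  psrc Q p = ptgt Q q ∧ ptgt Q p = psrc Q q

/-- A cycle: a path of positive length whose source equals its target. -/
def IsCycle (Q : Quiv) (p : PathDat Q) : Prop :=
  Ok Q p ∧ p.2 ≠ [] ∧ psrc Q p = ptgt Q p

/-- Rotation of a cycle: the paper's `rot (c_m ⋯ c_1) = c_{m-1} ⋯ c_1 c_m`
(the last arrow traversed becomes the first one traversed). -/
def rotP (Q : Quiv) (p : PathDat Q) : PathDat Q :=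
  match p.2.getLast? with
  | none => p
  | some a => (Q.src a, a :: p.2.dropLast)

/-- Iterated rotation `rot^i`. -/
def rotI (Q : Quiv) (i : ℕ) (p : PathDat Q) : PathDat Q := (rotP Q)^[i] p

def powL {α : Type} (l : List α) : ℕ → List α
  | 0 => []
  | n + 1 => l ++ powL l n

/-- The `n`-th power `p^n` of a (cyclic) path. -/
def powP (Q : Quiv) (p : PathDat Q) (n : ℕ) : PathDat Q := (p.1, powL p.2 n)

/-- A primitive cycle: a cycle that is not a proper power of another cycle. -/
def IsPrimitive (Q : Quiv) (p : PathDat Q) : Prop :=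
  IsCycle Q p ∧ ∀ (q : PathDat Q) (n : ℕ), IsCycle Q q → 2 ≤ n → p ≠ powP Q q n

/-- The period of a cycle: the least `i ≥ 1` with `rot^i p = p`. -/
noncomputable def periodP (Q : Quiv) (p : PathDat Q) : ℕ :=
  sInf {i : ℕ | 1 ≤ i ∧ rotI Q i p = p}

/-- Two cycles are conjugate (belong to the same circuit) if one is obtained
from the other by iterated rotation. -/
def RotEquiv (Q : Quiv) (p q : PathDat Q) : Prop := ∃ i : ℕ, rotI Q i p = q

/-- A cocomplete cycle: `p² ∈ B`. -/
def Cocomplete (Q : Quiv) (R : Set (Q.A × Q.A)) (p : PathDat Q) : Prop :=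
  IsCycle Q p ∧ InB Q R (powP Q p 2)

/-- A complete cycle: `p² ∈ Γ`. -/
def Complete (Q : Quiv) (R : Set (Q.A × Q.A)) (p : PathDat Q) : Prop :=
  IsCycle Q p ∧ InG Q R (powP Q p 2)

/-- `B`-maximal path: in `B` and not a proper subpath of another element of `B`. -/
def BMax (Q : Quiv) (R : Set (Q.A × Q.A)) (p : PathDat Q) : Prop :=
  InB Q R p ∧ ∀ q : PathDat Q, InB Q R q → p.2 <:+: q.2 → p.2 = q.2

/-- `Γ`-maximal path: in `Γ` and not a proper subpath of another element of `Γ`. -/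
def GMax (Q : Quiv) (R : Set (Q.A × Q.A)) (p : PathDat Q) : Prop :=
  InG Q R p ∧ ∀ q : PathDat Q, InG Q R q → p.2 <:+: q.2 → p.2 = q.2

def Adj (Q : Quiv) (v w : Q.V) : Prop :=
  ∃ a : Q.A, (Q.src a = v ∧ Q.tgt a = w) ∨ (Q.src a = w ∧ Q.tgt a = v)

/-- Connectedness of the underlying graph of the quiver. -/
def Connected (Q : Quiv) : Prop := ∀ v w : Q.V, Relation.ReflTransGen (Adj Q) v w

/-- A quadratic monomial presentation: the relations are paths of length 2. -/
def IsQuadMon (Q : Quiv) (R : Set (Q.A × Q.A)) : Prop :=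
  ∀ r ∈ R, Q.tgt r.1 = Q.src r.2

/-- A gentle presentation. -/
structure IsGentle (Q : Quiv) (R : Set (Q.A × Q.A)) : Prop where
  nonempty : Nonempty Q.V
  connected : Connected Q
  relComposable : ∀ r ∈ R, Q.tgt r.1 = Q.src r.2
  srcLe : ∀ v : Q.V, {a : Q.A | Q.src a = v}.ncard ≤ 2
  tgtLe : ∀ v : Q.V, {a : Q.A | Q.tgt a = v}.ncard ≤ 2
  uniqNotRelAfter : ∀ a : Q.A, {b : Q.A | Q.tgt a = Q.src b ∧ (a, b) ∉ R}.Subsingleton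
  uniqNotRelBefore : ∀ a : Q.A, {c : Q.A | Q.tgt c = Q.src a ∧ (c, a) ∉ R}.Subsingleton
  uniqRelAfter : ∀ a : Q.A, {b : Q.A | Q.tgt a = Q.src b ∧ (a, b) ∈ R}.Subsingleton
  uniqRelBefore : ∀ a : Q.A, {c : Q.A | Q.tgt c = Q.src a ∧ (c, a) ∈ R}.Subsingleton

/-- A spanning tree of the (finite, connected) quiver `Q`: a set of arrows
which connects all vertices and has exactly `|Q₀| - 1` elements. -/
def IsSpanningTree (Q : Quiv) (T : Set Q.A) : Prop :=
  (∀ v w : Q.V, Relation.ReflTransGen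
      (fun x y => ∃ a ∈ T, (Q.src a = x ∧ Q.tgt a = y) ∨ (Q.src a = y ∧ Q.tgt a = x)) v w) ∧
  T.ncard + 1 = Fintype.card Q.V

/-- A set of representatives, one for each rotation class of cycles
satisfying `Pred`. -/
def IsRepSet (Q : Quiv) (P : Set (PathDat Q)) (Pred : PathDat Q → Prop) : Prop :=
  (∀ p ∈ P, Pred p) ∧ ∀ q : PathDat Q, Pred q → ∃! p, p ∈ P ∧ RotEquiv Q q p

/-- `S` is a valid choice of the paper's set `Crep` for the predicate `Pred`
(e.g. cocompleteness, or completeness): it consists of all positive powers of a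
chosen set of representatives of the rotation classes of primitive cycles
satisfying `Pred`. -/
def IsCrep (Q : Quiv) (S : Set (PathDat Q)) (Pred : PathDat Q → Prop) : Prop :=
  ∃ P : Set (PathDat Q),
    IsRepSet Q P (fun p => IsPrimitive Q p ∧ Pred p) ∧
    S = {x | ∃ p ∈ P, ∃ n : ℕ, 1 ≤ n ∧ x = powP Q p n}

/-! ### The cochain complex `k(Γ ∥ B)` -/

/-- Membership in the degree-`m` basis `Γ_m ∥ B` of the cochain complex. -/
def GBmem (Q : Quiv) (R : Set (Q.A × Q.A)) (m : ℕ) (x : PathDat Q × PathDat Q) : Prop :=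
  InG Q R x.1 ∧ plen Q x.1 = m ∧ InB Q R x.2 ∧ Par Q x.1 x.2

abbrev GB (Q : Quiv) (R : Set (Q.A × Q.A)) (m : ℕ) :=
  {x : PathDat Q × PathDat Q // GBmem Q R m x}

/-- The degree-`m` component of the cochain complex `k(Γ ∥ B)`. -/
abbrev Coch (k : Type) [Field k] (Q : Quiv) (R : Set (Q.A × Q.A)) (m : ℕ) :=
  GB Q R m →₀ k

/-- The basis vector of `k(Γ_m ∥ B)` attached to a raw pair of path data
(and `0` if the pair is not in `Γ_m ∥ B`). -/
noncomputable def bv (k : Type) [Field k] (Q : Quiv) (R : Set (Q.A × Q.A)) (m : ℕ)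
    (x : PathDat Q × PathDat Q) : Coch k Q R m := by
  classical
  exact if h : GBmem Q R m x then Finsupp.single (⟨x, h⟩ : GB Q R m) (1 : k) else 0

/-- Extension on the left (in the paper's notation): `p ↦ b p`. -/
def extL (Q : Quiv) (b : Q.A) (p : PathDat Q) : PathDat Q := (p.1, p.2 ++ [b])

/-- Extension on the right (in the paper's notation): `p ↦ p a`. -/
def extR (Q : Quiv) (a : Q.A) (p : PathDat Q) : PathDat Q := (Q.src a, a :: p.2)

/-- The differential on a basis element:
`d^m (γ, α) = Σ_b (bγ, bα) - (-1)^m Σ_a (γa, αa)`. -/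
noncomputable def dB (k : Type) [Field k] (Q : Quiv) (R : Set (Q.A × Q.A)) (m : ℕ)
    (x : GB Q R m) : Coch k Q R (m + 1) := by
  classical
  exact
    (∑ b : Q.A,
      if h : GBmem Q R (m + 1) (extL Q b x.val.1, extL Q b x.val.2) then
        Finsupp.single (⟨_, h⟩ : GB Q R (m + 1)) (1 : k) else 0)
    - ((-1 : k) ^ m) •
      (∑ a : Q.A,
        if h : Q.tgt a = psrc Q x.val.1 ∧
            GBmem Q R (m + 1) (extR Q a x.val.1, extR Q a x.val.2) then
          Finsupp.single (⟨_, h.2⟩ : GB Q R (m + 1)) (1 : k) else 0)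

/-- The differential `d^m : k(Γ_m ∥ B) → k(Γ_{m+1} ∥ B)`. -/
noncomputable def dLin (k : Type) [Field k] (Q : Quiv) (R : Set (Q.A × Q.A)) (m : ℕ) :
    Coch k Q R m →ₗ[k] Coch k Q R (m + 1) :=
  Finsupp.linearCombination k (dB k Q R m)

/-- The element `𝟙 = Σ_{i ∈ Q₀} (e_i, e_i)` (placed in degree `m`; it is the
intended element when `m = 0`). -/
noncomputable def oneD (k : Type) [Field k] (Q : Quiv) (R : Set (Q.A × Q.A)) (m : ℕ) :
    Coch k Q R m :=
  ∑ i : Q.V, bv k Q R m ((i, []), (i, []))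

/-- `⟨α⟩ = Σ_{i=0}^{r-1} (s(rot^i α), rot^i α)`, `r` the period of `α`. -/
noncomputable def cycB (k : Type) [Field k] (Q : Quiv) (R : Set (Q.A × Q.A)) (m : ℕ)
    (α : PathDat Q) : Coch k Q R m :=
  ∑ i ∈ Finset.range (periodP Q α),
    bv k Q R m ((psrc Q (rotI Q i α), []), rotI Q i α)

/-- `⟨C⟩ = Σ_{i=0}^{r-1} (-1)^{i m} (rot^i C, s(rot^i C))`, `r` the period of `C`. -/
noncomputable def cycG (k : Type) [Field k] (Q : Quiv) (R : Set (Q.A × Q.A)) (m : ℕ)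
    (C : PathDat Q) : Coch k Q R m :=
  ∑ i ∈ Finset.range (periodP Q C),
    ((-1 : k) ^ (i * m)) • bv k Q R m (rotI Q i C, (psrc Q (rotI Q i C), []))

/-- The coboundary subspace in degree `m` (zero in degree `0`). -/
noncomputable def cobSp (k : Type) [Field k] (Q : Quiv) (R : Set (Q.A × Q.A)) :
    (m : ℕ) → Submodule k (Coch k Q R m)
  | 0 => ⊥
  | m + 1 => LinearMap.range (dLin k Q R m)

/-- The cocycle subspace in degree `m`. -/
noncomputable def cocSp (k : Type) [Field k] (Q : Quiv) (R : Set (Q.A × Q.A)) (m : ℕ) :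
    Submodule k (Coch k Q R m) :=
  LinearMap.ker (dLin k Q R m)

/-- The degree-`m` cohomology `HH^m` of the complex `k(Γ ∥ B)` vanishes:
every cocycle is a coboundary. -/
def CohomIsZero (k : Type) [Field k] (Q : Quiv) (R : Set (Q.A × Q.A)) (m : ℕ) : Prop :=
  cocSp k Q R m ≤ cobSp k Q R m

/-- The degree-`m` cohomology `HH^m` of the complex `k(Γ ∥ B)` is
finite-dimensional: there is a finite set of cocycles whose classes span it. -/
def CohomFinDim (k : Type) [Field k] (Q : Quiv) (R : Set (Q.A × Q.A)) (m : ℕ) : Prop :=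
  ∃ G : Finset (Coch k Q R m), ↑G ⊆ (cocSp k Q R m : Set (Coch k Q R m)) ∧
    cocSp k Q R m ≤ cobSp k Q R m ⊔ Submodule.span k ↑G

/-- The degree-`m` cohomology `HH^m` of the complex `k(Γ ∥ B)` has dimension at
most `n`: there are `n` cocycles whose classes span it. -/
def CohomDimLe (k : Type) [Field k] (Q : Quiv) (R : Set (Q.A × Q.A)) (m n : ℕ) : Prop :=
  ∃ G : Finset (Coch k Q R m), G.card ≤ n ∧
    ↑G ⊆ (cocSp k Q R m : Set (Coch k Q R m)) ∧
    cocSp k Q R m ≤ cobSp k Q R m ⊔ Submodule.span k ↑G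

/-- `Gen` is a basis of the kernel of `d⁰`, i.e. it freely generates `HH⁰`. -/
def FreelyGeneratesKer0 (k : Type) [Field k] (Q : Quiv) (R : Set (Q.A × Q.A))
    (Gen : Set (Coch k Q R 0)) : Prop :=
  (∀ x ∈ Gen, dLin k Q R 0 x = 0) ∧
  (∀ z : Coch k Q R 0, dLin k Q R 0 z = 0 → z ∈ Submodule.span k Gen) ∧
  LinearIndependent k (fun x : Gen => (x : Coch k Q R 0))

/-- The cohomology classes of the elements of `Gen` freely generate the
degree-`(m+1)` cohomology of `k(Γ ∥ B)`: all elements of `Gen` are cocycles,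
every cocycle is congruent to an element of their span modulo coboundaries, no
nonzero element of their span is a coboundary, and `Gen` is linearly
independent. -/
def FreelyGeneratesCohom (k : Type) [Field k] (Q : Quiv) (R : Set (Q.A × Q.A)) (m : ℕ)
    (Gen : Set (Coch k Q R (m + 1))) : Prop :=
  (∀ x ∈ Gen, dLin k Q R (m + 1) x = 0) ∧
  (∀ z : Coch k Q R (m + 1), dLin k Q R (m + 1) z = 0 →
      ∃ y : Coch k Q R m, z - dLin k Q R m y ∈ Submodule.span k Gen) ∧
  (∀ x ∈ Submodule.span k Gen, x ∈ LinearMap.range (dLin k Q R m) → x = 0) ∧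
  LinearIndependent k (fun x : Gen => (x : Coch k Q R (m + 1)))

/-! ### The chain complex `k(B ⊙ Γ)` -/

/-- Membership in the degree-`m` basis `B ⊙ Γ_m` of the chain complex. -/
def BGmem (Q : Quiv) (R : Set (Q.A × Q.A)) (m : ℕ) (x : PathDat Q × PathDat Q) : Prop :=
  InB Q R x.1 ∧ InG Q R x.2 ∧ plen Q x.2 = m ∧ AntiPar Q x.1 x.2

abbrev BGt (Q : Quiv) (R : Set (Q.A × Q.A)) (m : ℕ) :=
  {x : PathDat Q × PathDat Q // BGmem Q R m x}

/-- The degree-`m` component of the chain complex `k(B ⊙ Γ)`. -/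
abbrev Chn (k : Type) [Field k] (Q : Quiv) (R : Set (Q.A × Q.A)) (m : ℕ) :=
  BGt Q R m →₀ k

/-- The basis vector of `k(B ⊙ Γ_m)` attached to a raw pair of path data
(and `0` if the pair is not in `B ⊙ Γ_m`). -/
noncomputable def bw (k : Type) [Field k] (Q : Quiv) (R : Set (Q.A × Q.A)) (m : ℕ)
    (x : PathDat Q × PathDat Q) : Chn k Q R m := by
  classical
  exact if h : BGmem Q R m x then Finsupp.single (⟨x, h⟩ : BGt Q R m) (1 : k) else 0

/-- `l1(p)`: the last arrow of `p` (as a path of length one). -/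
def l1P (Q : Quiv) (p : PathDat Q) : PathDat Q :=
  match p.2.getLast? with
  | none => p
  | some a => (Q.src a, [a])

/-- `l2(p)`: `p` with its last arrow removed. -/
def l2P (Q : Quiv) (p : PathDat Q) : PathDat Q := (p.1, p.2.dropLast)

/-- `r1(p)`: `p` with its first arrow removed. -/
def r1P (Q : Quiv) (p : PathDat Q) : PathDat Q :=
  match p.2 with
  | [] => p
  | a :: l => (Q.tgt a, l)

/-- `r2(p)`: the first arrow of `p` (as a path of length one). -/
def r2P (Q : Quiv) (p : PathDat Q) : PathDat Q :=
  match p.2 with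
  | [] => p
  | a :: _ => (Q.src a, [a])

/-- The raw first term `(α·l1(γ), l2(γ))` of the boundary of `(α, γ)`. -/
def d1raw (Q : Quiv) (x : PathDat Q × PathDat Q) : PathDat Q × PathDat Q :=
  match x.2.2.getLast? with
  | none => x
  | some a => ((Q.src a, a :: x.1.2), (x.2.1, x.2.2.dropLast))

/-- The raw second term `(r2(γ)·α, r1(γ))` of the boundary of `(α, γ)`. -/
def d2raw (Q : Quiv) (x : PathDat Q × PathDat Q) : PathDat Q × PathDat Q :=
  match x.2.2 with
  | [] => x
  | c :: l => ((x.1.1, x.1.2 ++ [c]), (Q.tgt c, l))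

/-- The boundary of a basis element:
`d_m (α, γ) = (α·l1(γ), l2(γ)) + (-1)^m (r2(γ)·α, r1(γ))` (in degree `m = m+1`),
where pairs whose first component is not in `B` are interpreted as `0`. -/
noncomputable def bdB (k : Type) [Field k] (Q : Quiv) (R : Set (Q.A × Q.A)) (m : ℕ)
    (x : BGt Q R (m + 1)) : Chn k Q R m :=
  bw k Q R m (d1raw Q x.val) + ((-1 : k) ^ (m + 1)) • bw k Q R m (d2raw Q x.val)

/-- The boundary map `d_{m+1} : k(B ⊙ Γ_{m+1}) → k(B ⊙ Γ_m)`. -/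
noncomputable def bd (k : Type) [Field k] (Q : Quiv) (R : Set (Q.A × Q.A)) (m : ℕ) :
    Chn k Q R (m + 1) →ₗ[k] Chn k Q R m :=
  Finsupp.linearCombination k (bdB k Q R m)

/-- The subspace of cycles in degree `m` (everything in degree `0`). -/
noncomputable def ZSp (k : Type) [Field k] (Q : Quiv) (R : Set (Q.A × Q.A)) :
    (m : ℕ) → Submodule k (Chn k Q R m)
  | 0 => ⊤
  | m + 1 => LinearMap.ker (bd k Q R m)

/-- The subspace of boundaries in degree `m`. -/
noncomputable def BSp (k : Type) [Field k] (Q : Quiv) (R : Set (Q.A × Q.A)) (m : ℕ) :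
    Submodule k (Chn k Q R m) :=
  LinearMap.range (bd k Q R m)

/-- The degree-`m` homology `HH_m` of the complex `k(B ⊙ Γ)` vanishes:
every cycle is a boundary. -/
def HomIsZero (k : Type) [Field k] (Q : Quiv) (R : Set (Q.A × Q.A)) (m : ℕ) : Prop :=
  ZSp k Q R m ≤ BSp k Q R m

/-- The degree-`m` homology `HH_m` of the complex `k(B ⊙ Γ)` is
finite-dimensional: there is a finite set of cycles whose classes span it. -/
def HomFinDim (k : Type) [Field k] (Q : Quiv) (R : Set (Q.A × Q.A)) (m : ℕ) : Prop :=
  ∃ G : Finset (Chn k Q R m), ↑G ⊆ (ZSp k Q R m : Set (Chn k Q R m)) ∧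
    ZSp k Q R m ≤ BSp k Q R m ⊔ Submodule.span k ↑G

/-- The concatenation `α γ` of an antiparallel pair (a cycle, or a trivial path). -/
def concatP (Q : Quiv) (x : PathDat Q × PathDat Q) : PathDat Q := (x.2.1, x.2.2 ++ x.1.2)

/-- The degree-`m` component of the subcomplex `k(B ⊙ Γ)_C`, spanned by the
basis elements whose concatenation lies in the circuit (rotation class) of `c`. -/
noncomputable def Wsp (k : Type) [Field k] (Q : Quiv) (R : Set (Q.A × Q.A))
    (c : PathDat Q) (m : ℕ) : Submodule k (Chn k Q R m) :=
  Submodule.span k {z : Chn k Q R m |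
    ∃ x : BGt Q R m, RotEquiv Q (concatP Q x.val) c ∧ z = Finsupp.single x (1 : k)}

/-- The boundaries of the subcomplex `k(B ⊙ Γ)_C` in degree `m`. -/
noncomputable def WB (k : Type) [Field k] (Q : Quiv) (R : Set (Q.A × Q.A))
    (c : PathDat Q) (m : ℕ) : Submodule k (Chn k Q R m) :=
  Submodule.map (bd k Q R m) (Wsp k Q R c (m + 1))

/-- The cycles of the subcomplex `k(B ⊙ Γ)_C` in degree `m`. -/
noncomputable def WZ (k : Type) [Field k] (Q : Quiv) (R : Set (Q.A × Q.A))
    (c : PathDat Q) (m : ℕ) : Submodule k (Chn k Q R m) :=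
  ZSp k Q R m ⊓ Wsp k Q R c m

/-- The degree-`m` homology of `k(B ⊙ Γ)_C` is one-dimensional, spanned by the
homology class of `v`. -/
def SubHomSpannedBy (k : Type) [Field k] (Q : Quiv) (R : Set (Q.A × Q.A))
    (c : PathDat Q) (m : ℕ) (v : Chn k Q R m) : Prop :=
  v ∈ WZ k Q R c m ∧ v ∉ WB k Q R c m ∧
  ∀ z ∈ WZ k Q R c m, ∃ t : k, z - t • v ∈ WB k Q R c m

/-- `ĥ(c) = Σ_{i=0}^{r-1} (r1(rot^i c), r2(rot^i c))` (degree 1, for cocomplete cycles;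
placed in degree `m`). -/
noncomputable def hCycR (k : Type) [Field k] (Q : Quiv) (R : Set (Q.A × Q.A)) (m : ℕ)
    (c : PathDat Q) : Chn k Q R m :=
  ∑ i ∈ Finset.range (periodP Q c),
    bw k Q R m (r1P Q (rotI Q i c), r2P Q (rotI Q i c))

/-- `ĥ(c) = Σ_{i=0}^{r-1} (-1)^{(m+1) i} (s(rot^i c), rot^i c)` (degree `m`, for
complete cycles of length `m`). -/
noncomputable def hCycM (k : Type) [Field k] (Q : Quiv) (R : Set (Q.A × Q.A)) (m : ℕ)
    (c : PathDat Q) : Chn k Q R m :=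
  ∑ i ∈ Finset.range (periodP Q c),
    ((-1 : k) ^ ((m + 1) * i)) • bw k Q R m ((psrc Q (rotI Q i c), []), rotI Q i c)

/-- The homology classes of the elements of `Gen` freely generate the degree-`m`
homology of `k(B ⊙ Γ)`. -/
def FreelyGeneratesHom (k : Type) [Field k] (Q : Quiv) (R : Set (Q.A × Q.A)) (m : ℕ)
    (Gen : Set (Chn k Q R m)) : Prop :=
  (∀ x ∈ Gen, x ∈ ZSp k Q R m) ∧
  (∀ z ∈ ZSp k Q R m, ∃ y : Chn k Q R (m + 1), z - bd k Q R m y ∈ Submodule.span k Gen) ∧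
  (∀ x ∈ Submodule.span k Gen, x ∈ LinearMap.range (bd k Q R m) → x = 0) ∧
  LinearIndependent k (fun x : Gen => (x : Chn k Q R m))

namespace S14
open List

variable {Q : Quiv} {R : Set (Q.A × Q.A)}

/-- A "cyclically composable" cycle. -/
structure CY (Q : Quiv) (p : PathDat Q) : Prop where
  ne : p.2 ≠ []
  comp : p.2.Chain' (fun a b => Q.tgt a = Q.src b)
  hs : ∀ a ∈ p.2.head?, Q.src a = p.1
  lt : ∀ a ∈ p.2.getLast?, Q.tgt a = p.1

/-- A "good cycle": cyclically composable and cyclically in `R`. -/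
structure GC (Q : Quiv) (R : Set (Q.A × Q.A)) (p : PathDat Q) : Prop where
  cy : CY Q p
  chR : p.2.Chain' (fun a b => (a, b) ∈ R)
  wrapR : ∀ a ∈ p.2.getLast?, ∀ b ∈ p.2.head?, (a, b) ∈ R

section ListHelp
variable {α : Type*} {P : α → α → Prop} {l : List α} {a b : α}

lemma head?_app (l' : List α) (h : l ≠ []) : (l ++ l').head? = l.head? := by
  cases l with
  | nil => exact absurd rfl h
  | cons x xs => rfl

lemma getLast?_cc (a b : α) (l : List α) : (a :: (l ++ [b])).getLast? = some b := by
  rw [show a :: (l ++ [b]) = (a :: l) ++ [b] by simp, List.getLast?_concat]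

lemma chain'_wrap (h : Chain' P ((l ++ [b]) ++ [a])) : P b a := by
  replace h := List.isChain_append.mp h
  exact h.2.2 b (by rw [List.getLast?_concat]; rfl) a rfl

lemma chain'_left (h : Chain' P (l ++ [a])) : Chain' P l :=
  (List.isChain_append.mp h).1

lemma chain'_head_cc (h : Chain' P (a :: l)) : ∀ y ∈ l.head?, P a y :=
  (List.isChain_cons.mp h).1

lemma chain'_tail_cc (h : Chain' P (a :: l)) : Chain' P l :=
  (List.isChain_cons.mp h).2

end ListHelp

lemma rotP_nil (v : Q.V) : rotP Q (v, ([] : List Q.A)) = (v, []) := rfl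

lemma rotP_concat (v : Q.V) (l : List Q.A) (a : Q.A) :
    rotP Q (v, l ++ [a]) = (Q.src a, a :: l) := by
  simp [rotP, List.getLast?_concat, List.dropLast_concat]

lemma plen_rotP (p : PathDat Q) : (rotP Q p).2.length = p.2.length := by
  rcases List.eq_nil_or_concat p.2 with h | ⟨l, a, h⟩
  · obtain ⟨v, l2⟩ := p; simp only at h; subst h; rfl
  · obtain ⟨v, l2⟩ := p; simp only at h
    rw [List.concat_eq_append] at h; subst h
    rw [rotP_concat]; simp

lemma CY.rot {p : PathDat Q} (h : CY Q p) : CY Q (rotP Q p) := by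
  rcases List.eq_nil_or_concat p.2 with hn | ⟨l, a, hl⟩
  · exact absurd hn h.ne
  · obtain ⟨v, l2⟩ := p; simp only at hl
    rw [List.concat_eq_append] at hl; subst hl
    rw [rotP_concat]
    have htgt : Q.tgt a = v := h.lt a (by rw [List.getLast?_concat]; rfl)
    rcases List.eq_nil_or_concat l with hn | ⟨l', b, hl'⟩
    · subst hn
      have hsrc : Q.src a = v := h.hs a rfl
      exact ⟨by simp, List.isChain_singleton a, by simp, by simp [htgt, hsrc]⟩
    · rw [List.concat_eq_append] at hl'; subst hl'
      have hba : Q.tgt b = Q.src a :=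
        chain'_wrap (P := fun a b => Q.tgt a = Q.src b) h.comp
      refine ⟨by simp, ?_, by simp, ?_⟩
      · refine List.isChain_cons.mpr ?_
        refine ⟨?_, chain'_left h.comp⟩
        intro y hy
        have hy' : y ∈ ((l' ++ [b]) ++ [a]).head? := by
          rwa [head?_app _ (by simp)]
        rw [htgt, h.hs y hy']
      · intro x hx
        rw [getLast?_cc] at hx
        simp only [Option.mem_some_iff] at hx; subst hx
        exact hba

lemma GC.rot {p : PathDat Q} (h : GC Q R p) : GC Q R (rotP Q p) := by
  rcases List.eq_nil_or_concat p.2 with hn | ⟨l, a, hl⟩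
  · exact absurd hn h.cy.ne
  · obtain ⟨v, l2⟩ := p; simp only at hl
    rw [List.concat_eq_append] at hl; subst hl
    refine ⟨h.cy.rot, ?_, ?_⟩ <;> rw [rotP_concat]
    · refine List.isChain_cons.mpr ?_
      refine ⟨?_, chain'_left h.chR⟩
      intro y hy
      rcases List.eq_nil_or_concat l with hn | ⟨l', b, hl'⟩
      · subst hn; simp at hy
      · rw [List.concat_eq_append] at hl'; subst hl'
        refine h.wrapR a (by rw [List.getLast?_concat]; rfl) y ?_
        rwa [head?_app _ (by simp)]
    · intro x hx y hy
      simp only [List.head?_cons, Option.mem_some_iff] at hy; subst hy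
      rcases List.eq_nil_or_concat l with hn | ⟨l', b, hl'⟩
      · subst hn; simp at hx; subst hx
        exact h.wrapR a (by simp) a (by simp)
      · rw [List.concat_eq_append] at hl'; subst hl'
        rw [getLast?_cc] at hx
        simp only [Option.mem_some_iff] at hx; subst hx
        exact chain'_wrap (P := fun a b => (a, b) ∈ R) h.chR

lemma GC.ofRot {p : PathDat Q} (hcy : CY Q p) (h : GC Q R (rotP Q p)) : GC Q R p := by
  rcases List.eq_nil_or_concat p.2 with hn | ⟨l, a, hl⟩
  · exact absurd hn hcy.ne
  · obtain ⟨v, l2⟩ := p; simp only at hl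
    rw [List.concat_eq_append] at hl; subst hl
    rw [rotP_concat] at h
    refine ⟨hcy, ?_, ?_⟩
    · refine List.isChain_append.mpr ?_
      refine ⟨chain'_tail_cc h.chR, by simp, ?_⟩
      intro x hx y hy
      simp only [List.head?_cons, Option.mem_some_iff] at hy; subst hy
      rcases List.eq_nil_or_concat l with hn | ⟨l', b, hl'⟩
      · subst hn; simp at hx
      · rw [List.concat_eq_append] at hl'; subst hl'
        rw [List.getLast?_concat] at hx
        simp only [Option.mem_some_iff] at hx; subst hx
        exact h.wrapR b (getLast?_cc _ _ _) a rfl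
    · intro x hx y hy
      rw [List.getLast?_concat] at hx
      simp only [Option.mem_some_iff] at hx; subst hx
      rcases List.eq_nil_or_concat l with hn | ⟨l', b, hl'⟩
      · subst hn; simp at hy; subst hy
        exact h.wrapR a (by simp) a (by simp)
      · rw [List.concat_eq_append] at hl'; subst hl'
        rw [head?_app _ (by simp)] at hy
        exact chain'_head_cc h.chR y hy

end S14
namespace S14

/-- The source vertex of a list of arrows, with default `w`. -/
def vtx (Q : Quiv) (w : Q.V) : List Q.A → Q.V
  | [] => w
  | a :: _ => Q.src a

lemma rot_iter (v u : List Q.A) (w : Q.V) (h : CY Q (w, u ++ v)) :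
    rotI Q v.length (w, u ++ v) = (vtx Q w (v ++ u), v ++ u) := by
  induction v using List.reverseRecOn generalizing u w with
  | nil =>
    simp only [List.length_nil, List.append_nil]
    cases hu : u with
    | nil => exact absurd (by simp [hu]) h.ne
    | cons x xs =>
      have hsx : Q.src x = w := by simpa using h.hs x (by simp [hu])
      subst hu
      simp [rotI, vtx, hsx]
  | append_singleton v' a ih =>
    have h1 : rotI Q (v'.length + 1) (w, u ++ (v' ++ [a])) =
        rotI Q v'.length (rotP Q (w, u ++ (v' ++ [a]))) := by
      simp [rotI, Function.iterate_succ_apply]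
    have h2 : rotP Q (w, u ++ (v' ++ [a])) = (Q.src a, (a :: u) ++ v') := by
      rw [show u ++ (v' ++ [a]) = (u ++ v') ++ [a] by simp, rotP_concat]; rfl
    have hcy : CY Q (Q.src a, (a :: u) ++ v') := by rw [← h2]; exact h.rot
    rw [show (v' ++ [a]).length = v'.length + 1 by simp, h1, h2, ih _ _ hcy]
    have hl : v' ++ a :: u = (v' ++ [a]) ++ u := by simp
    rw [hl]
    congr 1
    cases v' with
    | nil => rfl
    | cons x xs => rfl

lemma rot_len {p : PathDat Q} (h : CY Q p) : rotI Q p.2.length p = p := by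
  obtain ⟨v, l⟩ := p
  have := rot_iter l [] v (by simpa using h)
  simp only [List.nil_append, List.append_nil] at this
  rw [this]
  cases hl : l with
  | nil => exact absurd (by simp [hl]) h.ne
  | cons x xs => rw [show vtx Q v (x :: xs) = Q.src x from rfl, h.hs x (by simp [hl])]

lemma rotP_inj {p p' : PathDat Q} (h : CY Q p) (h' : CY Q p')
    (he : rotP Q p = rotP Q p') : p = p' := by
  rcases List.eq_nil_or_concat p.2 with hn | ⟨l, a, hl⟩
  · exact absurd hn h.ne
  rcases List.eq_nil_or_concat p'.2 with hn' | ⟨l', a', hl'⟩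
  · exact absurd hn' h'.ne
  obtain ⟨v, l2⟩ := p; obtain ⟨v', l2'⟩ := p'
  simp only at hl hl'
  rw [List.concat_eq_append] at hl hl'; subst hl; subst hl'
  rw [rotP_concat, rotP_concat] at he
  obtain ⟨he1, he2⟩ := Prod.mk.injEq .. ▸ he
  simp only [Prod.mk.injEq, List.cons.injEq] at he
  obtain ⟨-, h3, h4⟩ := he
  subst h3; subst h4
  have hv : Q.tgt a = v := h.lt a (by rw [List.getLast?_concat]; rfl)
  have hv' : Q.tgt a = v' := h'.lt a (by rw [List.getLast?_concat]; rfl)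
  rw [← hv, hv']

end S14
namespace S14

lemma rotI_add (i j : ℕ) (p : PathDat Q) :
    rotI Q (i + j) p = rotI Q i (rotI Q j p) :=
  Function.iterate_add_apply _ i j p

lemma rotI_succ' (i : ℕ) (p : PathDat Q) :
    rotI Q (i + 1) p = rotP Q (rotI Q i p) :=
  Function.iterate_succ_apply' _ i p

lemma rotI_succ (i : ℕ) (p : PathDat Q) :
    rotI Q (i + 1) p = rotI Q i (rotP Q p) :=
  Function.iterate_succ_apply _ i p

/-- The standing hypotheses on the cycle `c`. -/
structure Setup (Q : Quiv) (R : Set (Q.A × Q.A)) (c : PathDat Q) (L r : ℕ) : Prop where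
  gc : GC Q R c
  len : c.2.length = L + 1
  per : periodP Q c = r

namespace Setup

variable {Q : Quiv} {R : Set (Q.A × Q.A)} {c : PathDat Q} {L r : ℕ}
variable (S : Setup Q R c L r)
include S

lemma gcq (i : ℕ) : GC Q R (rotI Q i c) := by
  induction i with
  | zero => exact S.gc
  | succ n ih => rw [rotI_succ']; exact ih.rot

lemma lenq (i : ℕ) : (rotI Q i c).2.length = L + 1 := by
  induction i with
  | zero => exact S.len
  | succ n ih => rw [rotI_succ', plen_rotP]; exact ih

lemma setNe : {i : ℕ | 1 ≤ i ∧ rotI Q i c = c}.Nonempty := by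
  refine ⟨L + 1, Nat.succ_le_succ (Nat.zero_le L), ?_⟩
  rw [← S.len]; exact rot_len S.gc.cy

lemma one_le_r : 1 ≤ r := by
  have h := (Nat.sInf_mem S.setNe).1
  rwa [show sInf {i : ℕ | 1 ≤ i ∧ rotI Q i c = c} = r from S.per] at h

lemma rpos : 0 < r := S.one_le_r

lemma q_r : rotI Q r c = c := by
  have h := (Nat.sInf_mem S.setNe).2
  rwa [show sInf {i : ℕ | 1 ≤ i ∧ rotI Q i c = c} = r from S.per] at h

lemma q_mul (n : ℕ) : rotI Q (n * r) c = c := by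
  induction n with
  | zero => rw [Nat.zero_mul]; rfl
  | succ m ih => rw [Nat.succ_mul, rotI_add, S.q_r, ih]

lemma q_per (i : ℕ) : rotI Q (i + r) c = rotI Q i c := by
  rw [rotI_add, S.q_r]

lemma q_mod (i : ℕ) : rotI Q i c = rotI Q (i % r) c := by
  conv_lhs => rw [← Nat.mod_add_div i r]
  rw [rotI_add, mul_comm, S.q_mul]

lemma q_l : rotI Q (L + 1) c = c := by
  rw [← S.len]; exact rot_len S.gc.cy

lemma min_r {d : ℕ} (h1 : 1 ≤ d) (h2 : rotI Q d c = c) : r ≤ d := by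
  rw [← S.per]; exact Nat.sInf_le ⟨h1, h2⟩

lemma q_inj {i j : ℕ} (hi : i < r) (hj : j < r) (hij : rotI Q i c = rotI Q j c) :
    i = j := by
  rcases lt_trichotomy i j with h | h | h
  · exfalso
    have : rotI Q (r - j + i) c = c := by
      rw [rotI_add, hij, ← rotI_add, Nat.sub_add_cancel hj.le, S.q_r]
    have := S.min_r (by omega) this
    omega
  · exact h
  · exfalso
    have : rotI Q (r - i + j) c = c := by
      rw [rotI_add, ← hij, ← rotI_add, Nat.sub_add_cancel hi.le, S.q_r]
    have := S.min_r (by omega) this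
    omega

lemma rotEquiv_q (i : ℕ) : RotEquiv Q (rotI Q i c) c := by
  induction i with
  | zero => exact ⟨0, rfl⟩
  | succ n ih =>
    obtain ⟨j, hj⟩ := ih
    refine ⟨j + L, ?_⟩
    rw [rotI_add j L, ← rotI_add L (n + 1) c, show L + (n + 1) = n + (L + 1) by omega,
      rotI_add n (L + 1) c, S.q_l, hj]

lemma per_rot : periodP Q (rotP Q c) = r := by
  have hset : {i : ℕ | 1 ≤ i ∧ rotI Q i (rotP Q c) = rotP Q c} =
      {i : ℕ | 1 ≤ i ∧ rotI Q i c = c} := by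
    ext i
    simp only [Set.mem_setOf_eq, and_congr_right_iff]
    intro _
    rw [← rotI_succ, rotI_succ']
    constructor
    · intro h; exact rotP_inj (S.gcq i).cy S.gc.cy h
    · intro h; rw [h]
  have h : periodP Q (rotP Q c) =
      sInf {i : ℕ | 1 ≤ i ∧ rotI Q i c = c} := by
    rw [show periodP Q (rotP Q c) =
      sInf {i : ℕ | 1 ≤ i ∧ rotI Q i (rotP Q c) = rotP Q c} from rfl, hset]
  rw [h, show sInf {i : ℕ | 1 ≤ i ∧ rotI Q i c = c} = r from S.per]

end Setup
end S14
namespace S14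
variable {Q : Quiv} {R : Set (Q.A × Q.A)}

def yraw (p : PathDat Q) : PathDat Q × PathDat Q := ((p.1, []), p)

def xraw (p : PathDat Q) : PathDat Q × PathDat Q := (l1P Q p, l2P Q p)

lemma l1P_concat (v : Q.V) (l : List Q.A) (a : Q.A) :
    l1P Q (v, l ++ [a]) = (Q.src a, [a]) := by
  simp [l1P, List.getLast?_concat]

lemma l2P_concat (v : Q.V) (l : List Q.A) (a : Q.A) :
    l2P Q (v, l ++ [a]) = (v, l) := by
  simp [l2P]

lemma ptgt_concat (v : Q.V) (l : List Q.A) (a : Q.A) :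
    ptgt Q (v, l ++ [a]) = Q.tgt a := by
  simp [ptgt, List.getLast?_concat]

lemma ptgt_nilp (v : Q.V) : ptgt Q (v, ([] : List Q.A)) = v := rfl

lemma ptgt_cy {p : PathDat Q} (h : CY Q p) : ptgt Q p = p.1 := by
  rcases List.eq_nil_or_concat p.2 with hn | ⟨l, a, hl⟩
  · exact absurd hn h.ne
  · obtain ⟨v, l2⟩ := p; simp only at hl
    rw [List.concat_eq_append] at hl; subst hl
    rw [ptgt_concat]
    exact h.lt a (by rw [List.getLast?_concat]; rfl)

lemma bg_y {p : PathDat Q} (h : GC Q R p) {m : ℕ} (hlen : p.2.length = m) :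
    BGmem Q R m (yraw p) := by
  refine ⟨⟨⟨List.isChain_nil, by simp [yraw]⟩, List.isChain_nil⟩,
    ⟨⟨h.cy.comp, h.cy.hs⟩, h.chR⟩, hlen, ?_, ?_⟩
  · show (p.1 : Q.V) = ptgt Q p
    rw [ptgt_cy h.cy]
  · rfl

lemma bg_x {p : PathDat Q} (h : GC Q R p) {m : ℕ} (hlen : p.2.length = m + 1) :
    BGmem Q R m (xraw p) := by
  rcases List.eq_nil_or_concat p.2 with hn | ⟨l, a, hl⟩
  · exact absurd hn h.cy.ne
  obtain ⟨v, l2⟩ := p; simp only at hl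
  rw [List.concat_eq_append] at hl; subst hl
  rw [xraw, l1P_concat, l2P_concat]
  have hlt : Q.tgt a = v := h.cy.lt a (by rw [List.getLast?_concat]; rfl)
  refine ⟨⟨⟨List.isChain_singleton a, by simp⟩, List.isChain_singleton a⟩,
    ⟨⟨chain'_left h.cy.comp, ?_⟩, chain'_left h.chR⟩, by simpa [plen] using hlen, ?_, ?_⟩
  · intro x hx
    rcases List.eq_nil_or_concat l with hn | ⟨l', b, hl'⟩
    · subst hn; simp at hx
    · rw [List.concat_eq_append] at hl'; subst hl'
      refine h.cy.hs x ?_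
      rwa [head?_app _ (by simp)]
  · show Q.src a = ptgt Q (v, l)
    rcases List.eq_nil_or_concat l with hn | ⟨l', b, hl'⟩
    · subst hn
      rw [ptgt_nilp]
      exact h.cy.hs a rfl
    · rw [List.concat_eq_append] at hl'; subst hl'
      rw [ptgt_concat]
      exact (chain'_wrap (P := fun a b => Q.tgt a = Q.src b) h.cy.comp).symm
  · show ptgt Q (Q.src a, [a]) = v
    rw [show ptgt Q (Q.src a, [a]) = Q.tgt a by simp [ptgt], hlt]

lemma concat_yraw (p : PathDat Q) : concatP Q (yraw p) = p := by
  simp [concatP, yraw]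

lemma concat_xraw {p : PathDat Q} (hne : p.2 ≠ []) : concatP Q (xraw p) = p := by
  rcases List.eq_nil_or_concat p.2 with hn | ⟨l, a, hl⟩
  · exact absurd hn hne
  · obtain ⟨v, l2⟩ := p; simp only at hl
    rw [List.concat_eq_append] at hl; subst hl
    rw [xraw, l1P_concat, l2P_concat, concatP]

lemma plen_rotI (j : ℕ) (p : PathDat Q) : (rotI Q j p).2.length = p.2.length := by
  induction j with
  | zero => rfl
  | succ n ih => rw [rotI_succ', plen_rotP, ih]

lemma rotI_mul_len {p : PathDat Q} (h : CY Q p) (n : ℕ) :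
    rotI Q (n * p.2.length) p = p := by
  induction n with
  | zero => rw [Nat.zero_mul]; rfl
  | succ m ih => rw [Nat.succ_mul, rotI_add, rot_len h, ih]

lemma gc_descend {p : PathDat Q} (hcy : CY Q p) (j : ℕ) (h : GC Q R (rotI Q j p)) :
    GC Q R p := by
  induction j generalizing p with
  | zero => exact h
  | succ n ih =>
    rw [rotI_succ] at h
    exact GC.ofRot hcy (ih hcy.rot h)

lemma ptgt_some {p : PathDat Q} {b : Q.A} (hb : b ∈ p.2.getLast?) :
    ptgt Q p = Q.tgt b := by
  simp only [ptgt]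
  rw [Option.mem_def.mp hb]
  rfl

lemma cy_concat {m : ℕ} {x : PathDat Q × PathDat Q} (hx : BGmem Q R m x)
    (hne : (concatP Q x).2 ≠ []) : CY Q (concatP Q x) := by
  obtain ⟨⟨v1, al⟩, ⟨v2, gl⟩⟩ := x
  obtain ⟨⟨⟨hBc, hBs⟩, -⟩, ⟨⟨hGc, hGs⟩, -⟩, hlen, hA1, hA2⟩ := hx
  simp only [concatP] at hne ⊢
  simp only at hBc hBs hGc hGs hA1 hA2
  have hA1' : (v1 : Q.V) = ptgt Q (v2, gl) := hA1
  have hA2' : ptgt Q (v1, al) = v2 := hA2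
  refine ⟨hne, ?_, ?_, ?_⟩
  · refine List.isChain_append.mpr ?_
    refine ⟨hGc, hBc, ?_⟩
    intro b hb a ha
    rw [ptgt_some (p := (v2, gl)) hb] at hA1'
    rw [hBs a ha, ← hA1']
  · intro y hy
    show Q.src y = v2
    cases hgl : gl with
    | nil =>
      subst hgl
      simp only [List.nil_append] at hy
      rw [hBs y hy, hA1', ptgt_nilp]
    | cons b t =>
      subst hgl
      simp only [List.cons_append, List.head?_cons, Option.mem_some_iff] at hy
      subst hy
      exact hGs b rfl
  · intro y hy
    show Q.tgt y = v2
    rcases List.eq_nil_or_concat al with hn | ⟨l', a, hl'⟩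
    · subst hn
      simp only [List.append_nil] at hy
      rw [← ptgt_some (p := (v2, gl)) hy, ← hA1', ← hA2', ptgt_nilp]
    · rw [List.concat_eq_append] at hl'; subst hl'
      rw [← List.append_assoc, List.getLast?_concat] at hy
      simp only [Option.mem_some_iff] at hy; subst hy
      rw [← hA2', ptgt_concat]

end S14
namespace S14
variable {Q : Quiv} {R : Set (Q.A × Q.A)} {c : PathDat Q} {L r : ℕ}

lemma Setup.classify (S : Setup Q R c L r) {m : ℕ} {x : PathDat Q × PathDat Q}
    (hx : BGmem Q R m x) (hrot : RotEquiv Q (concatP Q x) c) :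
    ∃ i < r, (m = L + 1 ∧ x = yraw (rotI Q i c)) ∨ (m = L ∧ x = xraw (rotI Q i c)) := by
  obtain ⟨j, hj⟩ := hrot
  have hlen : (concatP Q x).2.length = L + 1 := by
    rw [← plen_rotI j, hj, S.len]
  have hne : (concatP Q x).2 ≠ [] := by
    intro h; rw [h] at hlen; simp at hlen
  have hcy : CY Q (concatP Q x) := cy_concat hx hne
  have hgc : GC Q R (concatP Q x) := gc_descend hcy j (hj ▸ S.gc)
  have hip : concatP Q x = rotI Q ((j * L) % r) c := by
    rw [← S.q_mod, ← hj, ← rotI_add]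
    have h2 : j * L + j = j * (L + 1) := by ring
    rw [h2, ← hlen]
    exact (rotI_mul_len hcy j).symm
  refine ⟨(j * L) % r, Nat.mod_lt _ S.rpos, ?_⟩
  obtain ⟨⟨v1, al⟩, ⟨v2, gl⟩⟩ := x
  obtain ⟨⟨⟨hBc, hBs⟩, hBr⟩, ⟨⟨hGc, hGs⟩, hGr⟩, hm, hA1, hA2⟩ := hx
  simp only at hBc hBs hBr hGc hGs hGr hA1 hA2
  have halR : al.Chain' (fun a b => (a, b) ∈ R) := by
    have := hgc.chR
    simp only [concatP] at this
    exact (List.isChain_append.mp this).2.1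
  rcases al with _ | ⟨a, _ | ⟨b, t⟩⟩
  · -- al = []
    refine Or.inl ⟨?_, ?_⟩
    · rw [← hm]
      simp only [concatP, List.append_nil] at hlen
      show plen Q (v2, gl) = L + 1
      simpa [plen] using hlen
    · rw [← hip]
      have hv1 : v1 = v2 := hA2
      subst hv1
      simp [concatP, yraw]
  · -- al = [a]
    refine Or.inr ⟨?_, ?_⟩
    · rw [← hm]
      simp only [concatP, List.length_append, List.length_cons, List.length_nil] at hlen
      show plen Q (v2, gl) = L
      simp only [plen]
      omega
    · rw [← hip]
      have hsrc : Q.src a = v1 := hBs a rfl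
      rw [show concatP Q ((v1, [a]), (v2, gl)) = (v2, gl ++ [a]) from rfl]
      rw [xraw, l1P_concat, l2P_concat, hsrc]
  · -- al = a :: b :: t
    exfalso
    exact (List.isChain_cons_cons.mp hBr).1 (List.isChain_cons_cons.mp halR).1

end S14
namespace S14
variable {Q : Quiv} {R : Set (Q.A × Q.A)} {c : PathDat Q} {L r : ℕ}

lemma bw_mem (k : Type) [Field k] {m : ℕ} {x : PathDat Q × PathDat Q}
    (h : BGmem Q R m x) : bw k Q R m x = Finsupp.single (⟨x, h⟩ : BGt Q R m) 1 := by
  unfold bw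
  exact dif_pos h

lemma bw_not (k : Type) [Field k] {m : ℕ} {x : PathDat Q × PathDat Q}
    (h : ¬ BGmem Q R m x) : bw k Q R m x = 0 := by
  unfold bw
  exact dif_neg h

lemma d1raw_y (v w : Q.V) (l : List Q.A) (a : Q.A) :
    d1raw Q ((w, []), (v, l ++ [a])) = ((Q.src a, [a]), (v, l)) := by
  simp [d1raw, List.getLast?_concat]

lemma d1raw_yraw {p : PathDat Q} (h : CY Q p) :
    d1raw Q (yraw p) = xraw p := by
  rcases List.eq_nil_or_concat p.2 with hn | ⟨l, a, hl⟩
  · exact absurd hn h.ne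
  · obtain ⟨v, l2⟩ := p; simp only at hl
    rw [List.concat_eq_append] at hl; subst hl
    rw [yraw, xraw, l1P_concat, l2P_concat]
    exact d1raw_y v v l a

lemma d2raw_yrot {p : PathDat Q} (h : CY Q p) :
    d2raw Q (yraw (rotP Q p)) = xraw p := by
  rcases List.eq_nil_or_concat p.2 with hn | ⟨l, a, hl⟩
  · exact absurd hn h.ne
  · obtain ⟨v, l2⟩ := p; simp only at hl
    rw [List.concat_eq_append] at hl; subst hl
    rw [rotP_concat, xraw, l1P_concat, l2P_concat]
    have hlt : Q.tgt a = v := h.lt a (by rw [List.getLast?_concat]; rfl)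
    rw [yraw]
    show ((Q.src a, [a]), (Q.tgt a, l)) = ((Q.src a, [a]), (v, l))
    rw [hlt]

namespace Setup
variable (S : Setup Q R c L r)
include S

noncomputable def yE (i : ℕ) : BGt Q R (L + 1) :=
  ⟨yraw (rotI Q i c), bg_y (S.gcq i) (S.lenq i)⟩

noncomputable def xE (i : ℕ) : BGt Q R L :=
  ⟨xraw (rotI Q i c), bg_x (S.gcq i) (S.lenq i)⟩

variable (k : Type) [Field k]

noncomputable def Yv (i : ℕ) : Chn k Q R (L + 1) := Finsupp.single (S.yE i) 1

noncomputable def Xv (i : ℕ) : Chn k Q R L := Finsupp.single (S.xE i) 1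

noncomputable def Dv (i : ℕ) : Chn k Q R L :=
  S.Xv k (i + 1) + ((-1 : k) ^ (L + 1)) • S.Xv k i

lemma yE_shift (i n : ℕ) : S.yE (i + n * r) = S.yE i := by
  apply Subtype.ext
  show yraw (rotI Q (i + n * r) c) = yraw (rotI Q i c)
  rw [rotI_add, S.q_mul]

lemma xE_shift (i n : ℕ) : S.xE (i + n * r) = S.xE i := by
  apply Subtype.ext
  show xraw (rotI Q (i + n * r) c) = xraw (rotI Q i c)
  rw [rotI_add, S.q_mul]

lemma yE_r : S.yE r = S.yE 0 := by
  have := S.yE_shift 0 1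
  simpa using this

lemma xE_r : S.xE r = S.xE 0 := by
  have := S.xE_shift 0 1
  simpa using this

lemma q_ne (i : ℕ) : (rotI Q i c).2 ≠ [] := by
  intro h
  have := S.lenq i
  rw [h] at this
  simp at this

lemma yE_inj {i j : ℕ} (hi : i < r) (hj : j < r) (h : S.yE i = S.yE j) : i = j := by
  apply S.q_inj hi hj
  have := congrArg (fun z => z.val.2) h
  exact this

lemma xE_inj {i j : ℕ} (hi : i < r) (hj : j < r) (h : S.xE i = S.xE j) : i = j := by
  apply S.q_inj hi hj
  have h2 := congrArg (fun z => concatP Q z.val) h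
  simp only [xE] at h2
  rwa [concat_xraw (S.q_ne i), concat_xraw (S.q_ne j)] at h2

lemma bw_yq (i : ℕ) : bw k Q R (L + 1) (yraw (rotI Q i c)) = S.Yv k i :=
  bw_mem k (bg_y (S.gcq i) (S.lenq i))

lemma bw_xq (i : ℕ) : bw k Q R L (xraw (rotI Q i c)) = S.Xv k i :=
  bw_mem k (bg_x (S.gcq i) (S.lenq i))

lemma bd_single {m : ℕ} (v : BGt Q R (m + 1)) (a : k) :
    bd k Q R m (Finsupp.single v a) = a • bdB k Q R m v :=
  Finsupp.linearCombination_single ..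

lemma bdB_yE (i : ℕ) :
    bdB k Q R L (S.yE (i + 1)) = S.Xv k (i + 1) + ((-1 : k) ^ (L + 1)) • S.Xv k i := by
  rw [bdB]
  have h1 : d1raw Q (S.yE (i + 1)).val = xraw (rotI Q (i + 1) c) :=
    d1raw_yraw (S.gcq (i + 1)).cy
  have h2 : d2raw Q (S.yE (i + 1)).val = xraw (rotI Q i c) := by
    show d2raw Q (yraw (rotI Q (i + 1) c)) = _
    rw [rotI_succ']
    exact d2raw_yrot (S.gcq i).cy
  rw [h1, h2, S.bw_xq, S.bw_xq]

lemma bdB_xE {M : ℕ} (hM : L = M + 1) (x : BGt Q R (M + 1))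
    (hx : x.val = xraw c) : bdB k Q R M x = 0 := by
  have hlen : c.2.length = M + 2 := by rw [S.len, hM]
  rcases List.eq_nil_or_concat c.2 with hn | ⟨l, a, hl⟩
  · exact absurd hn S.gc.cy.ne
  obtain ⟨v, cl⟩ := c
  simp only at hl
  rw [List.concat_eq_append] at hl; subst hl
  have hlne : l ≠ [] := by
    intro h; rw [h] at hlen; simp at hlen
  rw [bdB, hx, xraw, l1P_concat, l2P_concat]
  rcases List.eq_nil_or_concat l with hn | ⟨l', b, hl'⟩
  · exact absurd hn hlne
  rw [List.concat_eq_append] at hl'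
  have hd1 : bw k Q R M (d1raw Q ((Q.src a, [a]), (v, l))) = 0 := by
    subst hl'
    rw [show d1raw Q ((Q.src a, [a]), (v, l' ++ [b])) =
        ((Q.src b, [b, a]), (v, l')) by simp [d1raw, List.getLast?_concat]]
    apply bw_not
    intro hmem
    have hba : (b, a) ∈ R := chain'_wrap (P := fun x y => (x, y) ∈ R) S.gc.chR
    exact (List.isChain_cons_cons.mp hmem.1.2).1 hba
  rcases l with _ | ⟨c1, t⟩
  · exact absurd rfl hlne
  have hd2 : bw k Q R M (d2raw Q ((Q.src a, [a]), (v, c1 :: t))) = 0 := by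
    rw [show d2raw Q ((Q.src a, [a]), (v, c1 :: t)) =
        ((Q.src a, [a, c1]), (Q.tgt c1, t)) by simp [d2raw]]
    apply bw_not
    intro hmem
    have hac : (a, c1) ∈ R :=
      S.gc.wrapR a (by rw [List.getLast?_concat]; rfl) c1 rfl
    exact (List.isChain_cons_cons.mp hmem.1.2).1 hac
  rw [hd1, hd2, smul_zero, add_zero]

end Setup
end S14
namespace S14
variable {Q : Quiv} {R : Set (Q.A × Q.A)} {c : PathDat Q} {L r : ℕ}

lemma mk_setup (hc : Complete Q R c) (hL : plen Q c = L + 1) (hr : periodP Q c = r) :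
    Setup Q R c L r := by
  obtain ⟨⟨hok, hne0, hcyc⟩, ⟨hok2, hchR2⟩⟩ := hc
  have hdl : (powP Q c 2).2 = c.2 ++ c.2 := by simp [powP, powL]
  rw [hdl] at hchR2
  have hlt : ∀ a ∈ c.2.getLast?, Q.tgt a = c.1 := by
    intro a ha
    rw [← ptgt_some ha]
    exact hcyc.symm
  refine ⟨⟨⟨hne0, hok.1, hok.2, hlt⟩, ?_, ?_⟩, hL, hr⟩
  · exact (List.isChain_append.mp hchR2).1
  · exact (List.isChain_append.mp hchR2).2.2

lemma sum_shift {M : Type*} [AddCommGroup M] (rr : ℕ) (F : ℕ → M) (hper : F rr = F 0) :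
    ∑ i ∈ Finset.range rr, F (i + 1) = ∑ i ∈ Finset.range rr, F i := by
  have h1 := Finset.sum_range_succ' F rr
  have h2 := Finset.sum_range_succ F rr
  rw [h2, hper] at h1
  exact (add_right_cancel h1.symm)

lemma single_smul_one {α : Type*} {k : Type} [Field k] (a : α) (t : k) :
    Finsupp.single a t = t • Finsupp.single a (1 : k) := by
  rw [Finsupp.smul_single, smul_eq_mul, mul_one]

namespace Setup
variable (S : Setup Q R c L r) (k : Type) [Field k]
include S

omit S in
lemma rep {m' : ℕ} (E : ℕ → BGt Q R m')
    (hinj : ∀ i < r, ∀ j < r, E i = E j → i = j) (z : Chn k Q R m')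
    (hz : z ∈ Submodule.span k ((fun i => Finsupp.single (E i) (1 : k)) '' Set.Iio r)) :
    z = ∑ i ∈ Finset.range r, Finsupp.single (E i) (z (E i)) := by
  classical
  have himg : (fun i => Finsupp.single (E i) (1 : k)) '' Set.Iio r
      = (fun b => Finsupp.single b (1 : k)) '' (E '' Set.Iio r) := by
    rw [Set.image_image]
  rw [himg, ← Finsupp.supported_eq_span_single, Finsupp.mem_supported] at hz
  ext b
  rw [Finsupp.finset_sum_apply]
  by_cases hb : ∃ i, i < r ∧ E i = b
  · obtain ⟨i0, hi0, rfl⟩ := hb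
    rw [Finset.sum_eq_single i0]
    · rw [Finsupp.single_apply, if_pos rfl]
    · intro i hi hne
      rw [Finsupp.single_apply, if_neg]
      intro he
      exact hne (hinj i (Finset.mem_range.mp hi) i0 hi0 he)
    · intro h; exact absurd (Finset.mem_range.mpr hi0) h
  · have hzb : z b = 0 := by
      by_contra h
      obtain ⟨i, hi, he⟩ := hz (Finsupp.mem_support_iff.mpr h)
      exact hb ⟨i, hi, he⟩
    rw [hzb]
    symm
    apply Finset.sum_eq_zero
    intro i hi
    rw [Finsupp.single_apply, if_neg]
    intro he
    exact hb ⟨i, Finset.mem_range.mp hi, he⟩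

lemma WspY : Wsp k Q R c (L + 1) =
    Submodule.span k ((fun i => Finsupp.single (S.yE i) (1 : k)) '' Set.Iio r) := by
  apply congrArg (Submodule.span k)
  ext z
  constructor
  · rintro ⟨x, hrot, rfl⟩
    obtain ⟨i, hir, hcase⟩ := S.classify x.prop hrot
    rcases hcase with ⟨-, hval⟩ | ⟨hm, -⟩
    · have hx : x = S.yE i := Subtype.ext hval
      exact ⟨i, hir, by rw [hx]⟩
    · omega
  · rintro ⟨i, hir, rfl⟩
    refine ⟨S.yE i, ?_, rfl⟩
    rw [show ((S.yE i : BGt Q R (L + 1)) : PathDat Q × PathDat Q)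
      = yraw (rotI Q i c) from rfl, concat_yraw]
    exact S.rotEquiv_q i

lemma WspX : Wsp k Q R c L =
    Submodule.span k ((fun i => Finsupp.single (S.xE i) (1 : k)) '' Set.Iio r) := by
  apply congrArg (Submodule.span k)
  ext z
  constructor
  · rintro ⟨x, hrot, rfl⟩
    obtain ⟨i, hir, hcase⟩ := S.classify x.prop hrot
    rcases hcase with ⟨hm, -⟩ | ⟨-, hval⟩
    · omega
    · have hx : x = S.xE i := Subtype.ext hval
      exact ⟨i, hir, by rw [hx]⟩
  · rintro ⟨i, hir, rfl⟩
    refine ⟨S.xE i, ?_, rfl⟩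
    rw [show ((S.xE i : BGt Q R L) : PathDat Q × PathDat Q)
      = xraw (rotI Q i c) from rfl, concat_xraw (S.q_ne i)]
    exact S.rotEquiv_q i

lemma Wsp_bot (m : ℕ) (h1 : m ≠ L + 1) (h2 : m ≠ L) : Wsp k Q R c m = ⊥ := by
  have he : {z : Chn k Q R m | ∃ x : BGt Q R m,
      RotEquiv Q (concatP Q x.val) c ∧ z = Finsupp.single x 1} = ∅ := by
    rw [Set.eq_empty_iff_forall_notMem]
    rintro z ⟨x, hrot, rfl⟩
    obtain ⟨i, hir, hcase⟩ := S.classify x.prop hrot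
    rcases hcase with ⟨hm, -⟩ | ⟨hm, -⟩ <;> omega
  show Submodule.span k _ = ⊥
  rw [he, Submodule.span_empty]

lemma bd_combo (t : ℕ → k) (hper : ∀ i, t (i + r) = t i) :
    bd k Q R L (∑ i ∈ Finset.range r, Finsupp.single (S.yE i) (t i)) =
      ∑ i ∈ Finset.range r, (t i + (-1 : k) ^ (L + 1) * t (i + 1)) • S.Xv k i := by
  have htr : t r = t 0 := by simpa using hper 0
  have hF : (fun i => Finsupp.single (S.yE i) (t i)) r
      = (fun i => Finsupp.single (S.yE i) (t i)) 0 := by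
    simp only [S.yE_r, htr]
  rw [← sum_shift r _ hF, map_sum]
  have hterm : ∀ i, bd k Q R L (Finsupp.single (S.yE (i + 1)) (t (i + 1))) =
      t (i + 1) • S.Xv k (i + 1) + ((-1 : k) ^ (L + 1) * t (i + 1)) • S.Xv k i := by
    intro i
    rw [S.bd_single, S.bdB_yE, smul_add, smul_smul, mul_comm]
  rw [Finset.sum_congr rfl (fun i _ => hterm i), Finset.sum_add_distrib]
  have hG : (fun i => t i • S.Xv k i) r = (fun i => t i • S.Xv k i) 0 := by
    simp only [htr, Xv, S.xE_r]
  rw [sum_shift r (fun i => t i • S.Xv k i) hG, ← Finset.sum_add_distrib]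
  apply Finset.sum_congr rfl
  intro i _
  rw [add_smul]

lemma eval_X (s : ℕ → k) {j : ℕ} (hj : j < r) :
    (∑ i ∈ Finset.range r, s i • S.Xv k i) (S.xE j) = s j := by
  classical
  rw [Finsupp.finset_sum_apply, Finset.sum_eq_single j]
  · rw [Finsupp.smul_apply, Xv, Finsupp.single_apply, if_pos rfl, smul_eq_mul, mul_one]
  · intro i hi hne
    rw [Finsupp.smul_apply, Xv, Finsupp.single_apply, if_neg, smul_zero]
    intro he
    exact hne (S.xE_inj (Finset.mem_range.mp hi) hj he)
  · intro h; exact absurd (Finset.mem_range.mpr hj) h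

lemma eval_Y (s : ℕ → k) {j : ℕ} (hj : j < r) :
    (∑ i ∈ Finset.range r, s i • S.Yv k i) (S.yE j) = s j := by
  classical
  rw [Finsupp.finset_sum_apply, Finset.sum_eq_single j]
  · rw [Finsupp.smul_apply, Yv, Finsupp.single_apply, if_pos rfl, smul_eq_mul, mul_one]
  · intro i hi hne
    rw [Finsupp.smul_apply, Yv, Finsupp.single_apply, if_neg, smul_zero]
    intro he
    exact hne (S.yE_inj (Finset.mem_range.mp hi) hj he)
  · intro h; exact absurd (Finset.mem_range.mpr hj) h

lemma WB_L : WB k Q R c L = Submodule.span k ((fun i => S.Dv k i) '' Set.Iio r) := by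
  show Submodule.map (bd k Q R L) (Wsp k Q R c (L + 1)) = _
  rw [S.WspY, Submodule.map_span, Set.image_image]
  apply congrArg (Submodule.span k)
  ext w
  simp only [Set.mem_image, Set.mem_Iio]
  constructor
  · rintro ⟨i, hi, rfl⟩
    rcases i with _ | j
    · refine ⟨r - 1, by have := S.rpos; omega, ?_⟩
      rw [show S.yE 0 = S.yE (r - 1 + 1) by
          rw [show r - 1 + 1 = r by have := S.rpos; omega, S.yE_r],
        S.bd_single, one_smul, S.bdB_yE]
      rfl
    · exact ⟨j, by omega, by rw [S.bd_single, one_smul, S.bdB_yE]; rfl⟩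
  · rintro ⟨i, hi, rfl⟩
    by_cases hir : i + 1 < r
    · exact ⟨i + 1, hir, by rw [S.bd_single, one_smul, S.bdB_yE]; rfl⟩
    · refine ⟨0, S.rpos, ?_⟩
      rw [show S.yE 0 = S.yE (i + 1) by
          rw [show i + 1 = r by omega, S.yE_r],
        S.bd_single, one_smul, S.bdB_yE]
      rfl

lemma Xv_shift (i n : ℕ) : S.Xv k (i + n * r) = S.Xv k i := by
  rw [Xv, Xv, S.xE_shift]

lemma Dv_mod (i : ℕ) : S.Dv k i = S.Dv k (i % r) := by
  unfold Dv
  have h1 : S.Xv k (i + 1) = S.Xv k (i % r + 1) := by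
    rw [← S.Xv_shift k (i % r + 1) (i / r)]
    congr 1
    calc i + 1 = (i % r + i / r * r) + 1 := by rw [Nat.mod_add_div']
      _ = i % r + 1 + i / r * r := by ring
  have h2 : S.Xv k i = S.Xv k (i % r) := by
    rw [← S.Xv_shift k (i % r) (i / r), Nat.mod_add_div']
  rw [h1, h2]

lemma Dv_mem (i : ℕ) : S.Dv k i ∈ WB k Q R c L := by
  rw [S.Dv_mod, S.WB_L]
  exact Submodule.subset_span ⟨i % r, Nat.mod_lt _ S.rpos, rfl⟩

lemma X_diff_mem (j : ℕ) :
    S.Xv k j - ((-1 : k) ^ (L + 2)) ^ j • S.Xv k 0 ∈ WB k Q R c L := by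
  induction j with
  | zero => simp
  | succ n ih =>
    have key : S.Xv k (n + 1) - ((-1 : k) ^ (L + 2)) ^ (n + 1) • S.Xv k 0 =
        S.Dv k n + ((-1 : k) ^ (L + 2)) •
          (S.Xv k n - ((-1 : k) ^ (L + 2)) ^ n • S.Xv k 0) := by
      unfold Dv
      have hed : (-1 : k) ^ (L + 1) = -((-1 : k) ^ (L + 2)) := by
        rw [pow_succ]; ring
      rw [hed]
      module
    rw [key]
    exact add_mem (S.Dv_mem k n) (Submodule.smul_mem _ _ ih)

lemma Xv0_cycle : S.Xv k 0 ∈ ZSp k Q R L := by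
  match L, S with
  | 0, S => exact Submodule.mem_top
  | (M + 1), S =>
    show Finsupp.single (S.xE 0) (1 : k) ∈ LinearMap.ker (bd k Q R M)
    rw [LinearMap.mem_ker, S.bd_single, S.bdB_xE k rfl (S.xE 0) rfl, smul_zero]

end Setup
end S14
namespace S14
namespace Setup
variable {Q : Quiv} {R : Set (Q.A × Q.A)} {c : PathDat Q} {L r : ℕ}
variable (S : Setup Q R c L r) (k : Type) [Field k]
include S

lemma hcyc_eq : hCycM k Q R (L + 1) c =
    ∑ i ∈ Finset.range r, ((-1 : k) ^ (L + 2)) ^ i • S.Yv k i := by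
  unfold hCycM
  rw [S.per]
  apply Finset.sum_congr rfl
  intro i _
  rw [show L + 1 + 1 = L + 2 from rfl, pow_mul]
  congr 1
  exact S.bw_yq k i

lemma hcyc_rot_eq : hCycM k Q R (L + 1) (rotP Q c) =
    ∑ i ∈ Finset.range r, ((-1 : k) ^ (L + 2)) ^ i • S.Yv k (i + 1) := by
  unfold hCycM
  rw [S.per_rot]
  apply Finset.sum_congr rfl
  intro i _
  rw [show L + 1 + 1 = L + 2 from rfl, pow_mul]
  congr 1
  rw [← rotI_succ]
  exact S.bw_yq k (i + 1)

lemma Yv_r : S.Yv k r = S.Yv k 0 := by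
  unfold Yv; rw [S.yE_r]

lemma Xv_r : S.Xv k r = S.Xv k 0 := by
  unfold Xv; rw [S.xE_r]

lemma bd_hcyc (hδr : ((-1 : k) ^ (L + 2)) ^ r = 1) :
    bd k Q R L (∑ i ∈ Finset.range r, ((-1 : k) ^ (L + 2)) ^ i • S.Yv k i) = 0 := by
  have hδ2 : (-1 : k) ^ (L + 2) * (-1 : k) ^ (L + 2) = 1 := by
    rw [← pow_add]; exact Even.neg_one_pow ⟨L + 2, rfl⟩
  have hε : (-1 : k) ^ (L + 1) = -((-1 : k) ^ (L + 2)) := by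
    rw [pow_succ]; ring
  have hsing : ∀ i, ((-1 : k) ^ (L + 2)) ^ i • S.Yv k i
      = Finsupp.single (S.yE i) (((-1 : k) ^ (L + 2)) ^ i) :=
    fun i => (single_smul_one _ _).symm
  rw [Finset.sum_congr rfl (fun i _ => hsing i),
    S.bd_combo k (fun i => ((-1 : k) ^ (L + 2)) ^ i)
      (fun i => by
        show ((-1 : k) ^ (L + 2)) ^ (i + r) = ((-1 : k) ^ (L + 2)) ^ i
        rw [pow_add ((-1 : k) ^ (L + 2)) i r, hδr, mul_one])]
  apply Finset.sum_eq_zero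
  intro i _
  have hco : ((-1 : k) ^ (L + 2)) ^ i
      + (-1 : k) ^ (L + 1) * ((-1 : k) ^ (L + 2)) ^ (i + 1) = 0 := by
    calc ((-1 : k) ^ (L + 2)) ^ i
          + (-1 : k) ^ (L + 1) * ((-1 : k) ^ (L + 2)) ^ (i + 1)
        = ((-1 : k) ^ (L + 2)) ^ i *
            (1 - (-1 : k) ^ (L + 2) * (-1 : k) ^ (L + 2)) := by rw [hε]; ring
      _ = 0 := by rw [hδ2]; ring
  rw [hco, zero_smul]

lemma kerY (z : Chn k Q R (L + 1)) (hz : z ∈ WZ k Q R c (L + 1)) :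
    z = (z (S.yE 0)) • ∑ i ∈ Finset.range r, ((-1 : k) ^ (L + 2)) ^ i • S.Yv k i ∧
      ((-1 : k) ^ (L + 2)) ^ r * z (S.yE 0) = z (S.yE 0) := by
  classical
  have hε : (-1 : k) ^ (L + 1) = -((-1 : k) ^ (L + 2)) := by
    rw [pow_succ]; ring
  have hε2 : (-1 : k) ^ (L + 1) * (-1 : k) ^ (L + 1) = 1 := by
    rw [← pow_add]; exact Even.neg_one_pow ⟨L + 1, rfl⟩
  obtain ⟨hzZ, hzWsp⟩ := Submodule.mem_inf.mp hz
  set t : ℕ → k := fun i => z (S.yE i) with htdef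
  have hper : ∀ i, t (i + r) = t i := by
    intro i
    show z (S.yE (i + r)) = z (S.yE i)
    congr 1
    have := S.yE_shift i 1
    rwa [one_mul] at this
  have hrep : z = ∑ i ∈ Finset.range r, Finsupp.single (S.yE i) (t i) :=
    rep k S.yE (fun i hi j hj => S.yE_inj hi hj) z (by rw [← S.WspY k]; exact hzWsp)
  have hbd : bd k Q R L z = 0 := hzZ
  have hcomb : ∑ i ∈ Finset.range r,
      (t i + (-1 : k) ^ (L + 1) * t (i + 1)) • S.Xv k i = 0 := by
    rw [← S.bd_combo k t hper, ← hrep, hbd]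
  have hcoef : ∀ j, j < r → t j + (-1 : k) ^ (L + 1) * t (j + 1) = 0 := by
    intro j hj
    have h2 := congrArg (fun w : Chn k Q R L => w (S.xE j)) hcomb
    rwa [S.eval_X k _ hj, Finsupp.zero_apply] at h2
  have hshift : ∀ a n, t (a + n * r) = t a := by
    intro a n
    induction n with
    | zero => simp
    | succ m ih => rw [show a + (m + 1) * r = a + m * r + r by ring, hper, ih]
  have hcoef' : ∀ i, t i + (-1 : k) ^ (L + 1) * t (i + 1) = 0 := by
    intro i
    have h1 : t i = t (i % r) := by rw [← hshift (i % r) (i / r), Nat.mod_add_div']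
    have h2 : t (i + 1) = t (i % r + 1) := by
      rw [← hshift (i % r + 1) (i / r)]
      congr 1
      calc i + 1 = (i % r + i / r * r) + 1 := by rw [Nat.mod_add_div']
        _ = i % r + 1 + i / r * r := by ring
    rw [h1, h2]
    exact hcoef (i % r) (Nat.mod_lt _ S.rpos)
  have hrec : ∀ i, t (i + 1) = (-1 : k) ^ (L + 2) * t i := by
    intro i
    have h := hcoef' i
    have h2 : (-1 : k) ^ (L + 1) * t (i + 1) = -t i := by linear_combination h
    calc t (i + 1) = ((-1 : k) ^ (L + 1) * (-1 : k) ^ (L + 1)) * t (i + 1) := by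
          rw [hε2, one_mul]
      _ = (-1 : k) ^ (L + 1) * ((-1 : k) ^ (L + 1) * t (i + 1)) := by ring
      _ = (-1 : k) ^ (L + 1) * (-t i) := by rw [h2]
      _ = (-1 : k) ^ (L + 2) * t i := by rw [hε]; ring
  have hform : ∀ i, t i = ((-1 : k) ^ (L + 2)) ^ i * t 0 := by
    intro i
    induction i with
    | zero => simp
    | succ n ih => rw [hrec n, ih]; ring
  constructor
  · have ht0 : z (S.yE 0) = t 0 := rfl
    rw [ht0, hrep, Finset.smul_sum]
    apply Finset.sum_congr rfl
    intro i _
    rw [hform i, single_smul_one, smul_smul]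
    congr 1
    ring
  · show ((-1 : k) ^ (L + 2)) ^ r * t 0 = t 0
    calc ((-1 : k) ^ (L + 2)) ^ r * t 0 = t r := (hform r).symm
      _ = t 0 := by simpa using hper 0

end Setup
end S14
/-- Let `(Q, R)` be a quadratic monomial presentation and `C`
the complete circuit of a complete cycle `c` of length `l = L + 1` and period
`r`. (1) If `(-1)^{(l+1)r} = 1` in `k`, then `H_m(k(B ⊙ Γ)_C) = 0` for all
`m ∉ {l, l-1}`, while `H_l` and `H_{l-1}` are one-dimensional, spanned by the
classes of `ĥ(c) = Σ_{i=0}^{r-1} (-1)^{(l+1)i} (s(rot^i c), rot^i c)` and of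
`(l1(c), l2(c))` respectively; these generators depend on the representative:
`ĥ(rot c) = (-1)^{l+1} ĥ(c)`, and `(l1(rot c), l2(rot c))` is homologous to
`(-1)^{l+1} (l1(c), l2(c))`. (2) If `(-1)^{(l+1)r} ≠ 1` in `k` then
`H_m(k(B ⊙ Γ)_C) = 0` for all `m`. -/
theorem homology_of_complete_circuit (k : Type) [Field k] (Q : Quiv)
    (R : Set (Q.A × Q.A)) (hq : IsQuadMon Q R) (c : PathDat Q) (L r : ℕ)
    (hc : Complete Q R c) (hL : plen Q c = L + 1) (hr : periodP Q c = r) :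
    (((-1 : k) ^ ((L + 2) * r) = 1 →
      (∀ m : ℕ, m ≠ L + 1 → m ≠ L → WZ k Q R c m ≤ WB k Q R c m) ∧
      SubHomSpannedBy k Q R c (L + 1) (hCycM k Q R (L + 1) c) ∧
      SubHomSpannedBy k Q R c L (bw k Q R L (l1P Q c, l2P Q c)) ∧
      hCycM k Q R (L + 1) (rotP Q c) = ((-1 : k) ^ (L + 2)) • hCycM k Q R (L + 1) c ∧
      (bw k Q R L (l1P Q (rotP Q c), l2P Q (rotP Q c)) -
          ((-1 : k) ^ (L + 2)) • bw k Q R L (l1P Q c, l2P Q c)) ∈ WB k Q R c L)) ∧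
    ((-1 : k) ^ ((L + 2) * r) ≠ 1 → ∀ m : ℕ, WZ k Q R c m ≤ WB k Q R c m) := by
  classical
  have S : S14.Setup Q R c L r := S14.mk_setup hc hL hr
  have hδ2 : (-1 : k) ^ (L + 2) * (-1 : k) ^ (L + 2) = 1 := by
    rw [← pow_add]; exact Even.neg_one_pow ⟨L + 2, rfl⟩
  have hε : (-1 : k) ^ (L + 1) = -((-1 : k) ^ (L + 2)) := by
    rw [pow_succ]; ring
  have hx0eq : bw k Q R L (l1P Q c, l2P Q c) = S.Xv k 0 := by
    rw [show (l1P Q c, l2P Q c) = S14.xraw (rotI Q 0 c) from rfl]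
    exact S.bw_xq k 0
  constructor
  · intro hδr0
    rw [pow_mul] at hδr0
    refine ⟨?_, ?_, ?_, ?_, ?_⟩
    · -- degrees other than L, L+1
      intro m hm1 hm2 z hz
      have hzW : z ∈ Wsp k Q R c m := (Submodule.mem_inf.mp hz).2
      rw [S.Wsp_bot k m hm1 hm2, Submodule.mem_bot] at hzW
      rw [hzW]
      exact zero_mem _
    · -- degree L+1
      have hh := S.hcyc_eq k
      refine ⟨?_, ?_, ?_⟩
      · rw [hh]
        refine Submodule.mem_inf.mpr ⟨?_, ?_⟩
        · show _ ∈ LinearMap.ker (bd k Q R L)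
          exact LinearMap.mem_ker.mpr (S.bd_hcyc k hδr0)
        · rw [S.WspY k]
          apply Submodule.sum_mem
          intro i hi
          exact Submodule.smul_mem _ _
            (Submodule.subset_span ⟨i, Finset.mem_range.mp hi, rfl⟩)
      · have hbot : WB k Q R c (L + 1) = ⊥ := by
          show Submodule.map (bd k Q R (L + 1)) (Wsp k Q R c (L + 1 + 1)) = ⊥
          rw [S.Wsp_bot k (L + 2) (by omega) (by omega), Submodule.map_bot]
        rw [hbot, Submodule.mem_bot, hh]
        intro h0
        have h1 := congrArg (fun w : Chn k Q R (L + 1) => w (S.yE 0)) h0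
        rw [S.eval_Y k _ S.rpos, Finsupp.zero_apply, pow_zero] at h1
        exact one_ne_zero h1
      · intro z hz
        obtain ⟨hz1, -⟩ := S.kerY k z hz
        refine ⟨z (S.yE 0), ?_⟩
        rw [hh, ← hz1, sub_self]
        exact zero_mem _
    · -- degree L
      rw [hx0eq]
      refine ⟨?_, ?_, ?_⟩
      · refine Submodule.mem_inf.mpr ⟨S.Xv0_cycle k, ?_⟩
        rw [S.WspX k]
        exact Submodule.subset_span ⟨0, S.rpos, rfl⟩
      · intro hmem
        set φ : Chn k Q R L →ₗ[k] k :=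
          ∑ j ∈ Finset.range r, ((-1 : k) ^ (L + 2)) ^ j • Finsupp.lapply (S.xE j)
          with hφ
        have hφap : ∀ w : Chn k Q R L,
            φ w = ∑ j ∈ Finset.range r, ((-1 : k) ^ (L + 2)) ^ j * w (S.xE j) := by
          intro w
          rw [hφ, LinearMap.sum_apply]
          apply Finset.sum_congr rfl
          intro j _
          rw [LinearMap.smul_apply, Finsupp.lapply_apply, smul_eq_mul]
        have hφX : ∀ i, i < r → φ (S.Xv k i) = ((-1 : k) ^ (L + 2)) ^ i := by
          intro i hi
          rw [hφap, Finset.sum_eq_single i]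
          · rw [show S.Xv k i = Finsupp.single (S.xE i) 1 from rfl,
              Finsupp.single_apply, if_pos rfl, mul_one]
          · intro j hj hne
            rw [show S.Xv k i = Finsupp.single (S.xE i) 1 from rfl,
              Finsupp.single_apply, if_neg, mul_zero]
            intro he
            exact hne (S.xE_inj hi (Finset.mem_range.mp hj) he).symm
          · intro h; exact absurd (Finset.mem_range.mpr hi) h
        have hφD : ∀ i, i < r → φ (S.Dv k i) = 0 := by
          intro i hi
          have hsplit : φ (S.Dv k i)
              = φ (S.Xv k (i + 1)) + (-1 : k) ^ (L + 1) * φ (S.Xv k i) := by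
            rw [show S.Dv k i
                = S.Xv k (i + 1) + (-1 : k) ^ (L + 1) • S.Xv k i from rfl,
              map_add, map_smul, smul_eq_mul]
          rw [hsplit, hφX i hi]
          by_cases hir : i + 1 < r
          · rw [hφX (i + 1) hir, hε]
            ring
          · have hieq : i + 1 = r := by omega
            have hXr : S.Xv k (i + 1) = S.Xv k 0 := by
              rw [hieq]; exact S.Xv_r k
            rw [hXr, hφX 0 S.rpos, pow_zero]
            have hδr1 : ((-1 : k) ^ (L + 2)) ^ i * (-1 : k) ^ (L + 2) = 1 := by
              rw [← pow_succ, hieq]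
              exact hδr0
            rw [hε]
            linear_combination (-1 : k) * hδr1
        have hker : WB k Q R c L ≤ LinearMap.ker φ := by
          rw [S.WB_L k, Submodule.span_le]
          rintro w ⟨i, hi, rfl⟩
          exact LinearMap.mem_ker.mpr (hφD i hi)
        have h1 : φ (S.Xv k 0) = 1 := by rw [hφX 0 S.rpos, pow_zero]
        have h0 : φ (S.Xv k 0) = 0 := LinearMap.mem_ker.mp (hker hmem)
        rw [h1] at h0
        exact one_ne_zero h0
      · intro z hz
        have hzW : z ∈ Submodule.span k
            ((fun i => Finsupp.single (S.xE i) (1 : k)) '' Set.Iio r) := by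
          rw [← S.WspX k]; exact (Submodule.mem_inf.mp hz).2
        have hrep := S14.Setup.rep k S.xE (fun i hi j hj => S.xE_inj hi hj) z hzW
        refine ⟨∑ j ∈ Finset.range r, z (S.xE j) * ((-1 : k) ^ (L + 2)) ^ j, ?_⟩
        have key : z - (∑ j ∈ Finset.range r,
              z (S.xE j) * ((-1 : k) ^ (L + 2)) ^ j) • S.Xv k 0
            = ∑ j ∈ Finset.range r, z (S.xE j) •
                (S.Xv k j - ((-1 : k) ^ (L + 2)) ^ j • S.Xv k 0) := by
          nth_rewrite 1 [hrep]
          rw [Finset.sum_smul, ← Finset.sum_sub_distrib]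
          apply Finset.sum_congr rfl
          intro j _
          rw [S14.single_smul_one, smul_sub, smul_smul]
          rfl
        rw [key]
        apply Submodule.sum_mem
        intro j _
        exact Submodule.smul_mem _ _ (S.X_diff_mem k j)
    · -- rotation of hCycM
      rw [S.hcyc_eq k, S.hcyc_rot_eq k]
      have key : ((-1 : k) ^ (L + 2)) •
          (∑ i ∈ Finset.range r, ((-1 : k) ^ (L + 2)) ^ i • S.Yv k (i + 1))
          = ∑ i ∈ Finset.range r, ((-1 : k) ^ (L + 2)) ^ i • S.Yv k i := by
        rw [Finset.smul_sum]
        have hterm : ∀ i, ((-1 : k) ^ (L + 2)) •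
            (((-1 : k) ^ (L + 2)) ^ i • S.Yv k (i + 1))
            = (fun j => ((-1 : k) ^ (L + 2)) ^ j • S.Yv k j) (i + 1) := by
          intro i
          simp only [smul_smul]
          congr 1
          rw [pow_succ]; ring
        rw [Finset.sum_congr rfl (fun i _ => hterm i)]
        exact S14.sum_shift r (fun j => ((-1 : k) ^ (L + 2)) ^ j • S.Yv k j) (by
          show ((-1 : k) ^ (L + 2)) ^ r • S.Yv k r
            = ((-1 : k) ^ (L + 2)) ^ 0 • S.Yv k 0
          rw [hδr0, pow_zero, S.Yv_r k])
      calc ∑ i ∈ Finset.range r, ((-1 : k) ^ (L + 2)) ^ i • S.Yv k (i + 1)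
          = ((-1 : k) ^ (L + 2) * (-1 : k) ^ (L + 2)) •
              ∑ i ∈ Finset.range r, ((-1 : k) ^ (L + 2)) ^ i • S.Yv k (i + 1) := by
            rw [hδ2, one_smul]
        _ = ((-1 : k) ^ (L + 2)) • (((-1 : k) ^ (L + 2)) •
              ∑ i ∈ Finset.range r, ((-1 : k) ^ (L + 2)) ^ i • S.Yv k (i + 1)) := by
            rw [mul_smul]
        _ = ((-1 : k) ^ (L + 2)) •
              ∑ i ∈ Finset.range r, ((-1 : k) ^ (L + 2)) ^ i • S.Yv k i := by
            rw [key]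
    · -- homologous rotation at degree L
      have ha : bw k Q R L (l1P Q (rotP Q c), l2P Q (rotP Q c)) = S.Xv k 1 := by
        rw [show (l1P Q (rotP Q c), l2P Q (rotP Q c))
          = S14.xraw (rotI Q 1 c) from rfl]
        exact S.bw_xq k 1
      rw [ha, hx0eq]
      have h1 := S.X_diff_mem k 1
      rwa [pow_one] at h1
  · -- case 2
    intro hδr0 m
    rw [pow_mul] at hδr0
    by_cases hm1 : m = L + 1
    · rw [hm1]
      intro z hz
      obtain ⟨hz1, hz2⟩ := S.kerY k z hz
      have ht0 : z (S.yE 0) = 0 := by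
        by_contra h
        exact hδr0 (mul_right_cancel₀ h (by rw [one_mul]; exact hz2))
      rw [hz1, ht0, zero_smul]
      exact zero_mem _
    by_cases hm2 : m = L
    · rw [hm2]
      intro z hz
      have hX0 : S.Xv k 0 ∈ WB k Q R c L := by
        have h1 := S.X_diff_mem k r
        rw [S.Xv_r k] at h1
        have h2 : (1 - ((-1 : k) ^ (L + 2)) ^ r) • S.Xv k 0 ∈ WB k Q R c L := by
          rw [sub_smul, one_smul]; exact h1
        have hne : (1 - ((-1 : k) ^ (L + 2)) ^ r) ≠ 0 := by
          intro h
          exact hδr0 (sub_eq_zero.mp h).symm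
        have h3 := Submodule.smul_mem (WB k Q R c L)
          (1 - ((-1 : k) ^ (L + 2)) ^ r)⁻¹ h2
        rwa [smul_smul, inv_mul_cancel₀ hne, one_smul] at h3
      have hXj : ∀ j, S.Xv k j ∈ WB k Q R c L := by
        intro j
        have h1 := S.X_diff_mem k j
        have h2 : S.Xv k j = (S.Xv k j - ((-1 : k) ^ (L + 2)) ^ j • S.Xv k 0)
            + ((-1 : k) ^ (L + 2)) ^ j • S.Xv k 0 := by abel
        rw [h2]
        exact add_mem h1 (Submodule.smul_mem _ _ hX0)
      have hzW : z ∈ Submodule.span k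
          ((fun i => Finsupp.single (S.xE i) (1 : k)) '' Set.Iio r) := by
        rw [← S.WspX k]; exact (Submodule.mem_inf.mp hz).2
      have hrep := S14.Setup.rep k S.xE (fun i hi j hj => S.xE_inj hi hj) z hzW
      rw [hrep]
      apply Submodule.sum_mem
      intro j _
      rw [S14.single_smul_one]
      exact Submodule.smul_mem _ _ (hXj j)
    · intro z hz
      have hzW : z ∈ Wsp k Q R c m := (Submodule.mem_inf.mp hz).2
      rw [S.Wsp_bot k m hm1 hm2, Submodule.mem_bot] at hzW
      rw [hzW]
      exact zero_mem _

end GentleTT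
end

section
/- Let (Q,R) be a quadratic monomial presentation. If C is a circuit (or a vertex) that is neither complete nor cocomplete, then the complex k(B⊙Γ)_C is exact: H_m(k(B⊙Γ)_C) = 0 for all m, except in the trivial case of a vertex e, where the homology is one-dimensional concentrated in degree 0 and spanned by (e,e). In particular, for every circuit C of positive length that is neither complete nor cocomplete, k(B⊙Γ)_C has vanishing homology in all degrees. -/
/-!
Common framework: quivers, paths (as a start vertex together with a list of
composable arrows, listed in order of traversal, so that the paper's path
`c_m ⋯ c_1` corresponds to the list `[c_1, …, c_m]`), gentle and quadratic
monomial presentations, the cochain complex `k(Γ ∥ B)` and the chain complex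
`k(B ⊙ Γ)` of the paper.
-/

namespace GentleTT

/-! ### Auxiliary infrastructure -/

section Aux

open List

variable {Q : Quiv} {R : Set (Q.A × Q.A)}

@[simp] lemma psrc_mk (v : Q.V) (l : List Q.A) : psrc Q (v, l) = v := rfl

@[simp] lemma ptgt_nil (v : Q.V) : ptgt Q (v, ([] : List Q.A)) = v := rfl

@[simp] lemma ptgt_concat (v : Q.V) (l : List Q.A) (a : Q.A) :
    ptgt Q (v, l ++ [a]) = Q.tgt a := by
  simp [ptgt, List.getLast?_concat]

@[simp] lemma rotP_nil (v : Q.V) : rotP Q (v, ([] : List Q.A)) = (v, []) := rfl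

lemma rotP_concat (v : Q.V) (l : List Q.A) (a : Q.A) :
    rotP Q (v, l ++ [a]) = (Q.src a, a :: l) := by
  rw [rotP.eq_def]
  simp [List.getLast?_concat]

lemma length_rotP (p : PathDat Q) : (rotP Q p).2.length = p.2.length := by
  obtain ⟨v, l⟩ := p
  rcases List.eq_nil_or_concat l with rfl | ⟨l', a, rfl⟩
  · rfl
  · simp only [List.concat_eq_append]
    rw [rotP_concat]; simp

lemma length_rotI (i : ℕ) (p : PathDat Q) : (rotI Q i p).2.length = p.2.length := by
  induction i with
  | zero => rfl
  | succ n ih =>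
    rw [rotI, Function.iterate_succ_apply'];
    rw [length_rotP]; exact ih

lemma rotI_succ_out (i : ℕ) (p : PathDat Q) :
    rotI Q (i + 1) p = rotP Q (rotI Q i p) :=
  Function.iterate_succ_apply' _ _ _

lemma rotI_succ_in (i : ℕ) (p : PathDat Q) :
    rotI Q (i + 1) p = rotI Q i (rotP Q p) :=
  Function.iterate_succ_apply _ _ _

lemma rotate_concat_pred (l : List Q.A) (b : Q.A) :
    (l ++ [b]).rotate l.length = b :: l := by
  rw [List.rotate_eq_drop_append_take (by simp)]
  simp

lemma rotI_spec (p : PathDat Q) (hok : Ok Q p) :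
    ∀ k, 1 ≤ k → k ≤ p.2.length →
      ∃ a t, p.2.rotate (p.2.length - k) = a :: t ∧ rotI Q k p = (Q.src a, a :: t) := by
  obtain ⟨v, l⟩ := p
  intro s hs1 hsn
  induction s with
  | zero => omega
  | succ s ih =>
    rcases Nat.eq_or_lt_of_le hs1 with h1 | h2
    · -- s + 1 = 1
      have hs0 : s = 0 := by omega
      subst hs0
      rcases List.eq_nil_or_concat l with rfl | ⟨l', a, rfl⟩
      · simp at hsn
      · simp only [List.concat_eq_append] at *
        refine ⟨a, l', ?_, ?_⟩
        · have : (l' ++ [a]).length - 1 = l'.length := by simp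
          rw [this, rotate_concat_pred]
        · show rotP Q (v, l' ++ [a]) = _
          exact rotP_concat v l' a
    · have hs1' : 1 ≤ s := by omega
      obtain ⟨a, t, hrot, hri⟩ := ih hs1' (by omega)
      have hlen : (a :: t).length = l.length := by
        rw [← hrot, List.length_rotate]
      rcases List.eq_nil_or_concat (a :: t) with h | ⟨t₂, b, hab⟩
      · simp at h
      · simp only [List.concat_eq_append] at hab
        refine ⟨b, (a :: t).dropLast, ?_, ?_⟩
        · have h1 : l.rotate (l.length - (s+1)) =
              (l.rotate (l.length - s)).rotate (l.length - 1) := by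
            rw [List.rotate_rotate]
            have hsn' : s + 1 ≤ l.length := hsn
            have h2 : (l.length - s) + (l.length - 1) = l.length + (l.length - (s+1)) := by
              omega
            rw [h2, ← List.rotate_rotate, List.rotate_length]
          rw [h1, hrot, hab]
          have h3 : l.length - 1 = t₂.length := by
            rw [← hlen, hab]; simp
          rw [h3, rotate_concat_pred, List.dropLast_concat]
        · rw [rotI_succ_out, hri, hab, rotP_concat, List.dropLast_concat]

lemma rotI_length (p : PathDat Q) (hok : Ok Q p) : rotI Q p.2.length p = p := by
  rcases List.eq_nil_or_concat p.2 with h | ⟨l', a, h⟩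
  · obtain ⟨v, l⟩ := p
    simp only at h
    subst h
    rfl
  · have hlen : 1 ≤ p.2.length := by rw [h]; simp
    obtain ⟨b, t, hrot, hri⟩ := rotI_spec p hok p.2.length hlen le_rfl
    simp only [Nat.sub_self, List.rotate_zero] at hrot
    rw [hri]
    obtain ⟨v, l⟩ := p
    simp only at hrot ⊢
    subst hrot
    have : Q.src b = v := hok.2 b rfl
    rw [this]

lemma rotEquiv_rotP (p c : PathDat Q) (hok : Ok Q p) (hne : p.2 ≠ [])
    (h : RotEquiv Q p c) : RotEquiv Q (rotP Q p) c := by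
  obtain ⟨i, hi⟩ := h
  cases i with
  | zero =>
    refine ⟨p.2.length - 1, ?_⟩
    have h1 : rotI Q (p.2.length - 1) (rotP Q p) = rotI Q p.2.length p := by
      rw [← rotI_succ_in]
      congr 1
      have : 1 ≤ p.2.length := List.length_pos_iff.2 hne
      omega

    rw [h1, rotI_length p hok]
    exact hi
  | succ i' =>
    exact ⟨i', by rw [← rotI_succ_in]; exact hi⟩

/-- All cyclic adjacent pairs of `p` satisfy `S`. -/
def CycAll (S : Q.A → Q.A → Prop) (p : PathDat Q) : Prop :=
  List.Chain' S (p.2 ++ p.2.take 1)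

lemma cycAll_rotP {S : Q.A → Q.A → Prop} {p : PathDat Q} (h : CycAll S p) :
    CycAll S (rotP Q p) := by
  obtain ⟨v, l⟩ := p
  rcases List.eq_nil_or_concat l with rfl | ⟨l', a, rfl⟩
  · exact h
  · simp only [List.concat_eq_append] at h ⊢
    rw [CycAll, rotP_concat]
    rcases l' with _ | ⟨x, t⟩
    · simpa [CycAll] using h
    · have h' : List.Chain' S ((x :: t ++ [a]) ++ [x]) := by
        simpa [CycAll] using h
      rw [List.Chain', List.isChain_append] at h'
      obtain ⟨h3, _, h5⟩ := h'
      have hax : S a x :=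
        h5 a (show a ∈ ((x :: t) ++ [a]).getLast? by rw [List.getLast?_concat]; rfl) x rfl
      show List.Chain' S ((a :: x :: t) ++ List.take 1 (a :: x :: t))
      simp only [List.take, List.cons_append]
      refine List.isChain_cons.2 ⟨?_, by simpa using h3⟩
      intro y hy
      simp at hy
      subst hy
      exact hax

lemma cycAll_rotI {S : Q.A → Q.A → Prop} {p : PathDat Q} (i : ℕ) (h : CycAll S p) :
    CycAll S (rotI Q i p) := by
  induction i with
  | zero => exact h
  | succ n ih => rw [rotI_succ_out]; exact cycAll_rotP ih

/-- `p` has both a cyclic pair in `R` and a cyclic pair not in `R`. -/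
def MixedP (Q : Quiv) (R : Set (Q.A × Q.A)) (p : PathDat Q) : Prop :=
  ¬ CycAll (fun a b => (a, b) ∈ R) p ∧ ¬ CycAll (fun a b => (a, b) ∉ R) p

lemma mixedP_ne_nil {p : PathDat Q} (h : MixedP Q R p) : p.2 ≠ [] := by
  intro hnil
  exact h.1 (by simp [CycAll, hnil, List.Chain'])

lemma mixedP_ne_single {p : PathDat Q} (h : MixedP Q R p) (a : Q.A) : p.2 ≠ [a] := by
  intro hone
  have h1 := h.1
  have h2 := h.2
  rw [CycAll, hone] at h1 h2
  simp [List.Chain', List.isChain_pair] at h1 h2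
  exact h1 h2

end Aux

section Aux2

open List

variable {k : Type} [Field k] {Q : Quiv} {R : Set (Q.A × Q.A)}

lemma sq_ok_chain (S : Q.A → Q.A → Prop) {c : PathDat Q} (hc : IsCycle Q c)
    (h : CycAll S c) : Ok Q (powP Q c 2) ∧ List.Chain' S (powP Q c 2).2 := by
  obtain ⟨⟨hch, hsrc⟩, hne, hcyc⟩ := hc
  obtain ⟨v, l⟩ := c
  simp only at hne hch hsrc ⊢
  obtain ⟨x, t, rfl⟩ := List.exists_cons_of_ne_nil hne
  have hpow : (powP Q (v, x :: t) 2).2 = (x :: t) ++ (x :: t) := by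
    simp [powP, powL]
  have hsx : Q.src x = v := hsrc x rfl
  have hlast : ∀ e ∈ (x :: t).getLast?, Q.tgt e = v := by
    intro e he
    have : ptgt Q (v, x :: t) = Q.tgt e := by
      rw [ptgt]
      simp only
      rw [Option.mem_def] at he
      rw [he]
      rfl
    rw [← this, ← hcyc]
    rfl
  have hwrapS : ∀ e ∈ (x :: t).getLast?, ∀ y ∈ (x :: t).head?, S e y := by
    have h' : List.Chain' S ((x :: t) ++ [x]) := h
    rw [List.Chain', List.isChain_append] at h'
    exact h'.2.2
  have hchS : List.Chain' S (x :: t) := by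
    have h' : List.Chain' S ((x :: t) ++ [x]) := h
    rw [List.Chain', List.isChain_append] at h'
    exact h'.1
  constructor
  · constructor
    · rw [hpow, List.Chain', List.isChain_append]
      refine ⟨hch, hch, ?_⟩
      intro e he y hy
      simp only [List.head?_cons, Option.mem_def, Option.some.injEq] at hy
      subst hy
      rw [hlast e he, hsx]
    · intro a ha
      rw [show (powP Q (v, x :: t) 2).2.head? = some x by rw [hpow]; rfl] at ha
      simp only [Option.mem_def, Option.some.injEq] at ha
      subst ha
      exact hsx
  · rw [hpow, List.Chain', List.isChain_append]
    exact ⟨hchS, hchS, hwrapS⟩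

lemma mixedP_of_cycle {c : PathDat Q} (hc : IsCycle Q c)
    (h1 : ¬ Complete Q R c) (h2 : ¬ Cocomplete Q R c) : MixedP Q R c := by
  constructor
  · intro hca
    exact h1 ⟨hc, (sq_ok_chain _ hc hca).1, (sq_ok_chain _ hc hca).2⟩
  · intro hca
    exact h2 ⟨hc, (sq_ok_chain _ hc hca).1, (sq_ok_chain _ hc hca).2⟩

lemma mixedP_rot {c p : PathDat Q} (h : MixedP Q R c) (hr : RotEquiv Q p c) :
    MixedP Q R p := by
  obtain ⟨i, hi⟩ := hr
  exact ⟨fun hca => h.1 (hi ▸ cycAll_rotI i hca), fun hca => h.2 (hi ▸ cycAll_rotI i hca)⟩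

lemma bw_pos (m : ℕ) {x : PathDat Q × PathDat Q} (h : BGmem Q R m x) :
    bw k Q R m x = Finsupp.single (⟨x, h⟩ : BGt Q R m) 1 := dif_pos h

lemma bw_neg (m : ℕ) {x : PathDat Q × PathDat Q} (h : ¬ BGmem Q R m x) :
    bw k Q R m x = 0 := dif_neg h

lemma bd_single (m : ℕ) (x : BGt Q R (m + 1)) :
    bd k Q R m (Finsupp.single x 1) = bdB k Q R m x := by
  rw [bd, Finsupp.linearCombination_single, one_smul]

/-- The raw homotopy: move the last arrow of `α` to the front of `γ`. -/
def Hraw (Q : Quiv) (x : PathDat Q × PathDat Q) : PathDat Q × PathDat Q :=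
  match x.1.2.getLast? with
  | none => x
  | some a => ((x.1.1, x.1.2.dropLast), (Q.src a, a :: x.2.2))

lemma Hraw_concat (u : Q.V) (l : List Q.A) (a : Q.A) (g : PathDat Q) :
    Hraw Q ((u, l ++ [a]), g) = ((u, l), (Q.src a, a :: g.2)) := by
  rw [Hraw.eq_def]
  simp [List.getLast?_concat]

lemma d1raw_concat (α : PathDat Q) (v : Q.V) (l : List Q.A) (a : Q.A) :
    d1raw Q (α, (v, l ++ [a])) = ((Q.src a, a :: α.2), (v, l)) := by
  rw [d1raw.eq_def]
  simp [List.getLast?_concat]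

lemma d2raw_cons (α : PathDat Q) (v : Q.V) (a : Q.A) (l : List Q.A) :
    d2raw Q (α, (v, a :: l)) = ((α.1, α.2 ++ [a]), (Q.tgt a, l)) := by
  rw [d2raw.eq_def]

/-- The homotopy on basis elements. -/
noncomputable def HB (k : Type) [Field k] (Q : Quiv) (R : Set (Q.A × Q.A)) (m : ℕ)
    (x : BGt Q R m) : Chn k Q R (m + 1) :=
  ((-1 : k) ^ (m + 1)) • bw k Q R (m + 1) (Hraw Q x.val)

/-- The homotopy `k(B ⊙ Γ_m) → k(B ⊙ Γ_{m+1})`. -/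
noncomputable def Hmap (k : Type) [Field k] (Q : Quiv) (R : Set (Q.A × Q.A)) (m : ℕ) :
    Chn k Q R m →ₗ[k] Chn k Q R (m + 1) :=
  Finsupp.linearCombination k (HB k Q R m)

lemma Hmap_single (m : ℕ) (x : BGt Q R m) :
    Hmap k Q R m (Finsupp.single x 1) = HB k Q R m x := by
  rw [Hmap, Finsupp.linearCombination_single, one_smul]

lemma Hmap_bw_pos (m : ℕ) {y : PathDat Q × PathDat Q} (h : BGmem Q R m y) :
    Hmap k Q R m (bw k Q R m y) = HB k Q R m ⟨y, h⟩ := by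
  rw [bw_pos m h, Hmap_single]

lemma Hmap_bw_neg (m : ℕ) {y : PathDat Q × PathDat Q} (h : ¬ BGmem Q R m y) :
    Hmap k Q R m (bw k Q R m y) = 0 := by
  rw [bw_neg m h, map_zero]

lemma bd_bw_pos (m : ℕ) {y : PathDat Q × PathDat Q} (h : BGmem Q R (m + 1) y) :
    bd k Q R m (bw k Q R (m + 1) y) = bdB k Q R m ⟨y, h⟩ := by
  rw [bw_pos (m+1) h, bd_single]

lemma bd_bw_neg (m : ℕ) {y : PathDat Q × PathDat Q} (h : ¬ BGmem Q R (m + 1) y) :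
    bd k Q R m (bw k Q R (m + 1) y) = 0 := by
  rw [bw_neg (m+1) h, map_zero]

lemma mem_Wsp_single {c : PathDat Q} (m : ℕ) (x : BGt Q R m)
    (h : RotEquiv Q (concatP Q x.val) c) :
    Finsupp.single x (1 : k) ∈ Wsp k Q R c m :=
  Submodule.subset_span ⟨x, h, rfl⟩

end Aux2

section Core

open List

variable {k : Type} [Field k] {Q : Quiv} {R : Set (Q.A × Q.A)}

lemma ptgt_of_getLast? {v : Q.V} {l : List Q.A} {e : Q.A} (he : l.getLast? = some e) :
    ptgt Q (v, l) = Q.tgt e := by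
  rw [ptgt]
  simp [he]

lemma core0 (x : BGt Q R 0) (hmix : MixedP Q R (concatP Q x.val)) :
    bd k Q R 0 (HB k Q R 0 x) = Finsupp.single x 1 := by
  obtain ⟨⟨⟨u, as⟩, ⟨v, gs⟩⟩, hmem⟩ := x
  obtain ⟨hB, hG, hlen, hap1, hap2⟩ := id hmem
  have hgs : gs = [] := List.length_eq_zero_iff.mp hlen
  subst hgs
  have hconc : concatP Q ((u, as), (v, ([] : List Q.A))) = (v, as) := by
    simp [concatP]
  rw [hconc] at hmix
  have hne : as ≠ [] := mixedP_ne_nil hmix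
  rcases List.eq_nil_or_concat as with h | ⟨as', a, has⟩
  · exact absurd h hne
  simp only [List.concat_eq_append] at has
  have hne' : as' ≠ [] := by
    rintro rfl
    exact mixedP_ne_single hmix a (by simpa using has)
  obtain ⟨a1, at', has'⟩ := List.exists_cons_of_ne_nil hne'
  subst has'
  subst has
  -- basic facts
  have hva : Q.tgt a = v := by
    have h2 := hap2
    rw [show ptgt Q ((u, (a1 :: at') ++ [a]), (v, ([] : List Q.A))).1 = Q.tgt a from
      ptgt_concat u (a1 :: at') a] at h2
    exact h2
  have hwrap : (a, a1) ∈ R := by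
    by_contra hna
    apply hmix.2
    show List.Chain' _ (((a1 :: at') ++ [a]) ++ List.take 1 ((a1 :: at') ++ [a]))
    have ht1 : List.take 1 ((a1 :: at') ++ [a]) = [a1] := rfl
    rw [ht1, List.Chain', List.isChain_append]
    refine ⟨hB.2, List.isChain_singleton a1, ?_⟩
    intro e he y hy
    rw [List.getLast?_concat] at he
    simp only [List.head?_cons, Option.mem_def, Option.some.injEq] at he hy
    subst he; subst hy
    exact hna
  -- validity of the homotopy image
  have hy1 : BGmem Q R 1 ((u, a1 :: at'), (Q.src a, [a])) := by
    refine ⟨⟨⟨?_, ?_⟩, ?_⟩, ⟨⟨?_, ?_⟩, ?_⟩, rfl, ?_, ?_⟩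
    · exact hB.1.1.prefix ⟨[a], rfl⟩
    · intro e he
      simp only [List.head?_cons, Option.mem_def, Option.some.injEq] at he
      subst he
      exact hB.1.2 a1 rfl
    · exact hB.2.prefix ⟨[a], rfl⟩
    · exact List.isChain_singleton a
    · intro e he
      simp only [List.head?_cons, Option.mem_def, Option.some.injEq] at he
      subst he
      rfl
    · exact List.isChain_singleton a
    · show u = ptgt Q (Q.src a, [a])
      rw [show ptgt Q (Q.src a, [a]) = Q.tgt a from ptgt_of_getLast? rfl, hva]
      exact hap1
    · show ptgt Q (u, a1 :: at') = Q.src a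
      rcases List.eq_nil_or_concat (a1 :: at') with h | ⟨t2, e, he⟩
      · simp at h
      simp only [List.concat_eq_append] at he
      rw [ptgt_of_getLast? (e := e) (by rw [he, List.getLast?_concat])]
      have hc := hB.1.1
      rw [List.Chain', List.isChain_append] at hc
      exact hc.2.2 e (by rw [he, List.getLast?_concat]; rfl) a rfl
  -- compute
  rw [HB, Hraw_concat, map_smul, bd_bw_pos 0 hy1, bdB]
  have hd1 : d1raw Q (((u, a1 :: at'), (Q.src a, [a])) : PathDat Q × PathDat Q)
      = ((Q.src a, a :: (a1 :: at')), (Q.src a, [])) := by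
    have := d1raw_concat (Q := Q) (u, a1 :: at') (Q.src a) [] a
    simpa using this
  have hd2 : d2raw Q (((u, a1 :: at'), (Q.src a, [a])) : PathDat Q × PathDat Q)
      = ((u, (a1 :: at') ++ [a]), (Q.tgt a, [])) := d2raw_cons _ _ _ _
  rw [hd1, hd2, hva]
  have hbad : ¬ BGmem Q R 0 (((Q.src a, a :: (a1 :: at')), (Q.src a, [])) :
      PathDat Q × PathDat Q) := by
    intro hb
    have := hb.1.2
    rw [List.Chain', List.isChain_cons_cons] at this
    exact this.1 hwrap
  rw [bw_neg 0 hbad, bw_pos 0 hmem]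
  simp

end Core

section CoreS

open List

variable {k : Type} [Field k] {Q : Quiv} {R : Set (Q.A × Q.A)}

@[simp] lemma plen_mk (v : Q.V) (l : List Q.A) : plen Q (v, l) = l.length := rfl

lemma head?_concat_of {α : Type} {l l' : List α} {e : α} (he : l.head? = some e) :
    (l ++ l').head? = some e := by
  cases l with
  | nil => simp at he
  | cons a t => simpa using he

lemma head?_concat_rev {α : Type} {l l' : List α} (hne : l ≠ []) :
    (l ++ l').head? = l.head? := by
  cases l with
  | nil => exact absurd rfl hne
  | cons a t => rfl

lemma ptgt_cons (w : Q.V) (e : Q.A) (l : List Q.A) :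
    ptgt Q (w, e :: l) = ptgt Q (Q.tgt e, l) := by
  rcases List.eq_nil_or_concat l with rfl | ⟨l2, b, hl⟩
  · simp [ptgt]
  · simp only [List.concat_eq_append] at hl
    subst hl
    rw [show (e :: (l2 ++ [b])) = (e :: l2) ++ [b] by simp, ptgt_concat, ptgt_concat]

lemma ptgt_prefix {v : Q.V} {l : List Q.A} {e : Q.A}
    (hch : List.Chain' (fun a b => Q.tgt a = Q.src b) (l ++ [e]))
    (hhead : ∀ y ∈ (l ++ [e]).head?, Q.src y = v) :
    ptgt Q (v, l) = Q.src e := by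
  rcases List.eq_nil_or_concat l with rfl | ⟨l2, f, hl⟩
  · exact (hhead e rfl).symm
  · simp only [List.concat_eq_append] at hl
    subst hl
    rw [ptgt_concat]
    rw [List.Chain', List.isChain_append] at hch
    exact hch.2.2 f (by rw [List.getLast?_concat]; rfl) e rfl

lemma coreS (m : ℕ) (x : BGt Q R (m + 1)) (hmix : MixedP Q R (concatP Q x.val)) :
    bd k Q R (m + 1) (HB k Q R (m + 1) x) + Hmap k Q R m (bdB k Q R m x)
      = Finsupp.single x 1 := by
  obtain ⟨⟨⟨u, as⟩, ⟨v, gs⟩⟩, hmem⟩ := x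
  obtain ⟨hB, hG, hlen, hap1, hap2⟩ := id hmem
  simp only [plen_mk] at hlen
  have hgsne : gs ≠ [] := by
    intro h; rw [h] at hlen; simp at hlen
  obtain ⟨g1, gt, hg1⟩ := List.exists_cons_of_ne_nil hgsne
  have hsrcg1 : Q.src g1 = v := hG.1.2 g1 (by rw [hg1]; rfl)
  obtain ⟨gs2, gN, hgt⟩ : ∃ gs2 gN, gs = gs2 ++ [gN] := by
    rcases List.eq_nil_or_concat gs with h | ⟨gs2, gN, h⟩
    · exact absurd h hgsne
    · exact ⟨gs2, gN, by simpa using h⟩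
  have hconc : concatP Q (((u, as), (v, gs)) : PathDat Q × PathDat Q) = (v, gs ++ as) := rfl
  rw [hconc] at hmix
  rcases List.eq_nil_or_concat as with hasnil | ⟨as2, a, has⟩
  · -- Case I : `α` is trivial
    subst hasnil
    have huv : u = v := by
      have := hap2
      simpa [ptgt] using this
    have hu : u = Q.tgt gN := by
      have := hap1
      rw [hgt] at this
      simpa [ptgt_concat] using this
    -- `gs` has length at least 2
    have hgt_ne : gt ≠ [] := by
      rintro rfl
      refine mixedP_ne_single hmix g1 ?_
      simp [hg1]
    obtain ⟨gt2, gNb, hgt2⟩ : ∃ gt2 gNb, gt = gt2 ++ [gNb] := by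
      rcases List.eq_nil_or_concat gt with h | ⟨t, e, h⟩
      · exact absurd h hgt_ne
      · exact ⟨t, e, by simpa using h⟩
    have hgNb : gNb = gN ∧ gs2 = g1 :: gt2 := by
      have : g1 :: (gt2 ++ [gNb]) = gs2 ++ [gN] := by rw [← hgt2, ← hg1, hgt]
      have h2 : (g1 :: gt2) ++ [gNb] = gs2 ++ [gN] := by simpa using this
      constructor
      · have h3 := congrArg List.getLast? h2
        rw [List.getLast?_concat, List.getLast?_concat] at h3
        exact Option.some.inj h3
      · have h3 := congrArg List.dropLast h2
        rw [List.dropLast_concat, List.dropLast_concat] at h3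
        exact h3.symm
    obtain ⟨hNN, hgs2⟩ := hgNb
    rw [hNN] at hgt2
    -- the wrap pair is not a relation
    have hwrapN : (gN, g1) ∉ R := by
      intro hin
      apply hmix.1
      show List.Chain' _ ((gs ++ []) ++ List.take 1 (gs ++ []))
      have h1 : gs ++ [] = gs := by simp
      rw [h1, show List.take 1 gs = [g1] by rw [hg1]; rfl, List.Chain', List.isChain_append]
      refine ⟨hG.2, List.isChain_singleton g1, ?_⟩
      intro e he y hy
      rw [hgt, List.getLast?_concat] at he
      simp only [List.head?_cons, Option.mem_def, Option.some.injEq] at he hy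
      subst he; subst hy
      exact hin
    -- first term vanishes
    have hHraw : Hraw Q (((u, ([] : List Q.A)), (v, gs)) : PathDat Q × PathDat Q)
        = ((u, []), (v, gs)) := rfl
    have hbad0 : ¬ BGmem Q R (m + 1 + 1) (((u, ([] : List Q.A)), (v, gs)) :
        PathDat Q × PathDat Q) := by
      intro hb
      have := hb.2.2.1
      simp only [plen_mk] at this
      omega
    rw [HB, hHraw, bw_neg _ hbad0, smul_zero, map_zero, zero_add]
    -- second term
    have hd1 : d1raw Q (((u, ([] : List Q.A)), (v, gs)) : PathDat Q × PathDat Q)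
        = ((Q.src gN, [gN]), (v, gs2)) := by
      rw [hgt]
      exact d1raw_concat _ _ _ _
    have hd2 : d2raw Q (((u, ([] : List Q.A)), (v, gs)) : PathDat Q × PathDat Q)
        = ((u, [g1]), (Q.tgt g1, gt)) := by
      rw [hg1]
      exact d2raw_cons _ _ _ _
    have hlgs2 : gs2.length = m := by
      rw [hgt] at hlen
      simp at hlen
      omega
    have hy1 : BGmem Q R m (((Q.src gN, [gN]), (v, gs2)) : PathDat Q × PathDat Q) := by
      refine ⟨⟨⟨List.isChain_singleton gN, ?_⟩, List.isChain_singleton gN⟩,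
        ⟨⟨?_, ?_⟩, ?_⟩, by simpa using hlgs2, ?_, ?_⟩
      · intro e he
        simp only [List.head?_cons, Option.mem_def, Option.some.injEq] at he
        subst he; rfl
      · exact hG.1.1.prefix ⟨[gN], by rw [hgt]⟩
      · intro e he
        exact hG.1.2 e (by rw [hgt, head?_concat_of he]; rfl)
      · exact hG.2.prefix ⟨[gN], by rw [hgt]⟩
      · show Q.src gN = ptgt Q (v, gs2)
        exact (ptgt_prefix (by rw [← hgt]; exact hG.1.1)
          (by rw [← hgt]; exact hG.1.2)).symm
      · show ptgt Q (Q.src gN, [gN]) = v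
        rw [ptgt_of_getLast? (show ([gN] : List Q.A).getLast? = some gN from rfl), ← hu, huv]
    have hy2 : BGmem Q R m (((u, [g1]), (Q.tgt g1, gt)) : PathDat Q × PathDat Q) := by
      have hgcons := hG.1.1
      rw [hg1, List.Chain', List.isChain_cons] at hgcons
      have hgRcons := hG.2
      rw [hg1, List.Chain', List.isChain_cons] at hgRcons
      refine ⟨⟨⟨List.isChain_singleton g1, ?_⟩, List.isChain_singleton g1⟩,
        ⟨⟨hgcons.2, ?_⟩, hgRcons.2⟩, ?_, ?_, ?_⟩
      · intro e he
        simp only [List.head?_cons, Option.mem_def, Option.some.injEq] at he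
        subst he; rw [hsrcg1, ← huv]
      · intro e he
        exact (hgcons.1 e he).symm
      · show gt.length = m
        rw [hg1] at hlen
        simpa using hlen
      · show u = ptgt Q (Q.tgt g1, gt)
        rw [← ptgt_cons v g1 gt, ← hg1]
        exact hap1
      · show ptgt Q (u, [g1]) = Q.tgt g1
        exact ptgt_of_getLast? rfl
    rw [bdB, hd1, hd2, map_add, map_smul, Hmap_bw_pos m hy1, Hmap_bw_pos m hy2]
    -- the `y1` homotopy term vanishes
    have hHraw1 : Hraw Q (((Q.src gN, [gN]), (v, gs2)) : PathDat Q × PathDat Q)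
        = ((Q.src gN, []), (Q.src gN, gN :: gs2)) := by
      have := Hraw_concat (Q := Q) (Q.src gN) [] gN (v, gs2)
      simpa using this
    have hbad1 : ¬ BGmem Q R (m + 1) (((Q.src gN, ([] : List Q.A)),
        (Q.src gN, gN :: gs2)) : PathDat Q × PathDat Q) := by
      intro hb
      have := hb.2.1.2
      rw [hgs2, List.Chain', List.isChain_cons] at this
      exact hwrapN (this.1 g1 rfl)
    -- the `y2` homotopy term gives the identity
    have hHraw2 : Hraw Q (((u, [g1]), (Q.tgt g1, gt)) : PathDat Q × PathDat Q)
        = ((u, []), (Q.src g1, g1 :: gt)) := by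
      have := Hraw_concat (Q := Q) u [] g1 (Q.tgt g1, gt)
      simpa using this
    rw [HB, HB, hHraw1, hHraw2, bw_neg _ hbad1, smul_zero, zero_add,
      hsrcg1, ← hg1, bw_pos _ hmem, smul_smul, ← pow_add]
    have : (-1 : k) ^ (m + 1 + (m + 1)) = 1 := by
      rw [show m + 1 + (m + 1) = 2 * (m + 1) by ring, pow_mul]
      norm_num
    rw [this, one_smul]
  · -- Case II : `α` nontrivial
    simp only [List.concat_eq_append] at has
    subst has
    have hva : Q.tgt a = v := by
      have h2 := hap2
      rw [show ptgt Q (((u, as2 ++ [a]), (v, gs)) : PathDat Q × PathDat Q).1 = Q.tgt a from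
        ptgt_concat u as2 a] at h2
      exact h2
    have hu : u = Q.tgt gN := by
      have h2 := hap1
      rw [hgt] at h2
      simpa [ptgt_concat] using h2
    have hlgs2 : gs2.length = m := by
      rw [hgt] at hlen
      simp at hlen
      omega
    have hHraw : Hraw Q (((u, as2 ++ [a]), (v, gs)) : PathDat Q × PathDat Q)
        = ((u, as2), (Q.src a, a :: gs)) := Hraw_concat u as2 a (v, gs)
    have hxd1 : d1raw Q (((u, as2 ++ [a]), (v, gs)) : PathDat Q × PathDat Q)
        = ((Q.src gN, gN :: (as2 ++ [a])), (v, gs2)) := by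
      have := d1raw_concat (Q := Q) (u, as2 ++ [a]) v gs2 gN
      rw [← hgt] at this
      exact this
    have hxd2 : d2raw Q (((u, as2 ++ [a]), (v, gs)) : PathDat Q × PathDat Q)
        = ((u, (as2 ++ [a]) ++ [g1]), (Q.tgt g1, gt)) := by
      have := d2raw_cons (Q := Q) (u, as2 ++ [a]) v g1 gt
      rw [← hg1] at this
      exact this
    have hHraw1 : Hraw Q (((Q.src gN, gN :: (as2 ++ [a])), (v, gs2)) : PathDat Q × PathDat Q)
        = ((Q.src gN, gN :: as2), (Q.src a, a :: gs2)) :=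
      Hraw_concat (Q.src gN) (gN :: as2) a (v, gs2)
    have hpow1 : ((-1 : k) ^ (m + 1)) * ((-1 : k) ^ (m + 1)) = 1 := by
      rw [← pow_add, show (m + 1) + (m + 1) = 2 * (m + 1) by ring, pow_mul]
      norm_num
    have hpow2 : ((-1 : k) ^ (m + 1 + 1)) * ((-1 : k) ^ (m + 1 + 1)) = 1 := by
      rw [← pow_add, show (m + 1 + 1) + (m + 1 + 1) = 2 * (m + 2) by ring, pow_mul]
      norm_num
    by_cases hR : (a, g1) ∈ R
    · -- wrap pair in `R`
      have hz : BGmem Q R (m + 1 + 1)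
          (((u, as2), (Q.src a, a :: gs)) : PathDat Q × PathDat Q) := by
        refine ⟨⟨⟨?_, ?_⟩, ?_⟩, ⟨⟨?_, ?_⟩, ?_⟩, ?_, ?_, ?_⟩
        · exact hB.1.1.prefix ⟨[a], rfl⟩
        · intro e he
          exact hB.1.2 e (by rw [head?_concat_of he]; rfl)
        · exact hB.2.prefix ⟨[a], rfl⟩
        · rw [List.Chain', List.isChain_cons]
          refine ⟨?_, hG.1.1⟩
          intro y hy
          rw [hg1] at hy
          simp only [List.head?_cons, Option.mem_def, Option.some.injEq] at hy
          subst hy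
          rw [hva, hsrcg1]
        · intro e he
          simp only [List.head?_cons, Option.mem_def, Option.some.injEq] at he
          subst he
          rfl
        · rw [List.Chain', List.isChain_cons]
          refine ⟨?_, hG.2⟩
          intro y hy
          rw [hg1] at hy
          simp only [List.head?_cons, Option.mem_def, Option.some.injEq] at hy
          subst hy
          exact hR
        · show (a :: gs).length = m + 1 + 1
          simp [hlen]
        · show u = ptgt Q (Q.src a, a :: gs)
          rw [ptgt_cons, hva]
          exact hap1
        · show ptgt Q (u, as2) = Q.src a
          exact ptgt_prefix hB.1.1 hB.1.2
      rw [HB, hHraw, map_smul, bd_bw_pos (m + 1) hz, bdB]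
      have hzd1 : d1raw Q (((u, as2), (Q.src a, a :: gs)) : PathDat Q × PathDat Q)
          = ((Q.src gN, gN :: as2), (Q.src a, a :: gs2)) := by
        have := d1raw_concat (Q := Q) (u, as2) (Q.src a) (a :: gs2) gN
        rw [show (a :: gs2) ++ [gN] = a :: gs by rw [hgt]; rfl] at this
        exact this
      have hzd2 : d2raw Q (((u, as2), (Q.src a, a :: gs)) : PathDat Q × PathDat Q)
          = ((u, as2 ++ [a]), (Q.tgt a, gs)) := d2raw_cons _ _ _ _
      rw [hzd1, hzd2, hva, bw_pos _ hmem, bdB, hxd1, hxd2, map_add, map_smul]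
      have hy2bad : ¬ BGmem Q R m
          (((u, (as2 ++ [a]) ++ [g1]), (Q.tgt g1, gt)) : PathDat Q × PathDat Q) := by
        intro hb
        have hch := hb.1.2
        rw [List.Chain', List.isChain_append] at hch
        exact hch.2.2 a (by rw [List.getLast?_concat]; rfl) g1 rfl hR
      rw [Hmap_bw_neg m hy2bad, smul_zero, add_zero]
      by_cases hA : ∀ y ∈ (as2 ++ [a]).head?, (gN, y) ∉ R
      · have hy1 : BGmem Q R m
            (((Q.src gN, gN :: (as2 ++ [a])), (v, gs2)) : PathDat Q × PathDat Q) := by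
          refine ⟨⟨⟨?_, ?_⟩, ?_⟩, ⟨⟨?_, ?_⟩, ?_⟩, ?_, ?_, ?_⟩
          · rw [List.Chain', List.isChain_cons]
            refine ⟨?_, hB.1.1⟩
            intro y hy
            rw [← hu]
            exact (hB.1.2 y hy).symm
          · intro e he
            simp only [List.head?_cons, Option.mem_def, Option.some.injEq] at he
            subst he
            rfl
          · rw [List.Chain', List.isChain_cons]
            exact ⟨hA, hB.2⟩
          · exact hG.1.1.prefix ⟨[gN], by rw [hgt]⟩
          · intro e he
            exact hG.1.2 e (by rw [hgt, head?_concat_of he]; rfl)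
          · exact hG.2.prefix ⟨[gN], by rw [hgt]⟩
          · show gs2.length = m
            exact hlgs2
          · show Q.src gN = ptgt Q (v, gs2)
            exact (ptgt_prefix (by rw [← hgt]; exact hG.1.1)
              (by rw [← hgt]; exact hG.1.2)).symm
          · show ptgt Q (Q.src gN, gN :: (as2 ++ [a])) = v
            rw [show gN :: (as2 ++ [a]) = (gN :: as2) ++ [a] by simp, ptgt_concat, hva]
        rw [Hmap_bw_pos m hy1, HB, hHraw1, smul_add, smul_smul, hpow2, one_smul]
        have hsign : ((-1 : k) ^ (m + 1 + 1)) = -((-1 : k) ^ (m + 1)) := by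
          rw [pow_succ]
          ring
        rw [hsign, neg_smul]
        abel
      · push_neg at hA
        obtain ⟨y, hy, hyR⟩ := hA
        have hy1bad : ¬ BGmem Q R m
            (((Q.src gN, gN :: (as2 ++ [a])), (v, gs2)) : PathDat Q × PathDat Q) := by
          intro hb
          have hch := hb.1.2
          rw [List.Chain', List.isChain_cons] at hch
          exact hch.1 y hy hyR
        rw [Hmap_bw_neg m hy1bad, add_zero]
        rcases as2 with _ | ⟨e, as3⟩
        · -- `α` is a single arrow and all cyclic pairs are relations : contradiction
          exfalso
          simp only [List.nil_append, List.head?_cons, Option.mem_def,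
            Option.some.injEq] at hy
          subst hy
          apply hmix.1
          show List.Chain' _ ((gs ++ [a]) ++ List.take 1 (gs ++ [a]))
          have ht1 : List.take 1 (gs ++ [a]) = [g1] := by
            rw [hg1]
            rfl
          rw [ht1, List.Chain', List.isChain_append]
          refine ⟨?_, List.isChain_singleton g1, ?_⟩
          · rw [List.isChain_append]
            refine ⟨hG.2, List.isChain_singleton a, ?_⟩
            intro e he y' hy'
            rw [hgt, List.getLast?_concat] at he
            simp only [List.head?_cons, Option.mem_def, Option.some.injEq] at he hy'
            subst he
            subst hy'
            exact hyR
          · intro e he y' hy'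
            rw [List.getLast?_concat] at he
            simp only [List.head?_cons, Option.mem_def, Option.some.injEq] at he hy'
            subst he
            subst hy'
            exact hR
        · -- `as2` nonempty : the extra boundary term is not in `B`
          simp only [List.cons_append, List.head?_cons, Option.mem_def,
            Option.some.injEq] at hy
          subst hy
          have hWbad : ¬ BGmem Q R (m + 1)
              (((Q.src gN, gN :: (e :: as3)), (Q.src a, a :: gs2)) : PathDat Q × PathDat Q) := by
            intro hb
            have hch := hb.1.2
            rw [List.Chain', List.isChain_cons] at hch
            exact hch.1 e rfl hyR
          rw [bw_neg _ hWbad, zero_add, smul_smul, hpow2, one_smul]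
    · -- wrap pair not in `R`
      have hzbad : ¬ BGmem Q R (m + 1 + 1)
          (((u, as2), (Q.src a, a :: gs)) : PathDat Q × PathDat Q) := by
        intro hb
        have hch := hb.2.1.2
        rw [List.Chain', List.isChain_cons] at hch
        exact hR (hch.1 g1 (by rw [hg1]; rfl))
      rw [HB, hHraw, bw_neg _ hzbad, smul_zero, map_zero, zero_add, bdB, hxd1, hxd2,
        map_add, map_smul]
      have hGc : List.Chain' (fun a b => Q.tgt a = Q.src b) (g1 :: gt) := by
        rw [← hg1]
        exact hG.1.1
      have hGr : List.Chain' (fun a b => (a, b) ∈ R) (g1 :: gt) := by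
        rw [← hg1]
        exact hG.2
      have hy2 : BGmem Q R m
          (((u, (as2 ++ [a]) ++ [g1]), (Q.tgt g1, gt)) : PathDat Q × PathDat Q) := by
        refine ⟨⟨⟨?_, ?_⟩, ?_⟩, ⟨⟨?_, ?_⟩, ?_⟩, ?_, ?_, ?_⟩
        · rw [List.Chain', List.isChain_append]
          refine ⟨hB.1.1, List.isChain_singleton g1, ?_⟩
          intro e he y hy
          rw [List.getLast?_concat] at he
          simp only [List.head?_cons, Option.mem_def, Option.some.injEq] at he hy
          subst he
          subst hy
          rw [hva, hsrcg1]
        · intro e he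
          rw [head?_concat_rev (by simp : as2 ++ [a] ≠ [])] at he
          exact hB.1.2 e he
        · rw [List.Chain', List.isChain_append]
          refine ⟨hB.2, List.isChain_singleton g1, ?_⟩
          intro e he y hy
          rw [List.getLast?_concat] at he
          simp only [List.head?_cons, Option.mem_def, Option.some.injEq] at he hy
          subst he
          subst hy
          exact hR
        · exact hGc.tail
        · intro e he
          exact ((List.isChain_cons.mp hGc).1 e he).symm
        · exact hGr.tail
        · show gt.length = m
          rw [hg1] at hlen
          simpa using hlen
        · show u = ptgt Q (Q.tgt g1, gt)
          rw [← ptgt_cons v g1 gt, ← hg1]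
          exact hap1
        · show ptgt Q (u, (as2 ++ [a]) ++ [g1]) = Q.tgt g1
          exact ptgt_concat _ _ _
      have hHraw2 : Hraw Q (((u, (as2 ++ [a]) ++ [g1]), (Q.tgt g1, gt)) : PathDat Q × PathDat Q)
          = ((u, as2 ++ [a]), (Q.src g1, g1 :: gt)) :=
        Hraw_concat u (as2 ++ [a]) g1 (Q.tgt g1, gt)
      rw [Hmap_bw_pos m hy2, HB, hHraw2, hsrcg1, ← hg1, bw_pos _ hmem]
      by_cases hy1v : BGmem Q R m
          (((Q.src gN, gN :: (as2 ++ [a])), (v, gs2)) : PathDat Q × PathDat Q)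
      · rw [Hmap_bw_pos m hy1v, HB, hHraw1]
        rcases hgs2e : gs2 with _ | ⟨e, gs3⟩
        · -- `gs = [gN]` : contradiction with mixedness
          exfalso
          have h0 : g1 :: gt = [gN] := by rw [← hg1, hgt, hgs2e]; rfl
          have hg1N : g1 = gN := by injection h0 with h1 h2
          have hgtnil : gt = [] := by injection h0 with h1 h2
          apply hmix.2
          show List.Chain' _ ((gs ++ (as2 ++ [a])) ++ List.take 1 (gs ++ (as2 ++ [a])))
          have hgsl : gs = [g1] := by rw [hg1, hgtnil]
          have ht1 : List.take 1 (gs ++ (as2 ++ [a])) = [g1] := by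
            rw [hgsl]
            rfl
          rw [ht1, List.Chain', List.isChain_append]
          have hchain : List.Chain' (fun a b => (a, b) ∉ R) (gs ++ (as2 ++ [a])) := by
            rw [hgsl]
            have := hy1v.1.2
            rw [hg1N]
            exact this
          refine ⟨hchain, List.isChain_singleton g1, ?_⟩
          intro e he y hy
          rw [show gs ++ (as2 ++ [a]) = (gs ++ as2) ++ [a] by simp,
            List.getLast?_concat] at he
          simp only [List.head?_cons, Option.mem_def, Option.some.injEq] at he hy
          subst he
          subst hy
          exact hR
        · -- `gs2` nonempty : the homotopy term is not in `Γ`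
          have he1 : e = g1 := by
            have : g1 :: gt = e :: (gs3 ++ [gN]) := by rw [← hg1, hgt, hgs2e]; rfl
            injection this with h1 h2
            exact h1.symm
          subst he1
          have hWbad : ¬ BGmem Q R (m + 1)
              (((Q.src gN, gN :: as2), (Q.src a, a :: e :: gs3)) : PathDat Q × PathDat Q) := by
            intro hb
            have hch := hb.2.1.2
            rw [List.Chain', List.isChain_cons] at hch
            exact hR (hch.1 e rfl)
          rw [bw_neg _ hWbad, smul_zero, zero_add, smul_smul, hpow1, one_smul]
      · rw [Hmap_bw_neg m hy1v, zero_add, smul_smul, hpow1, one_smul]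

end CoreS

section Final

open List

variable {k : Type} [Field k] {Q : Quiv} {R : Set (Q.A × Q.A)}

lemma rotI_nil (i : ℕ) (v : Q.V) : rotI Q i ((v, ([] : List Q.A)) : PathDat Q) = (v, []) := by
  induction i with
  | zero => rfl
  | succ n ih => rw [rotI_succ_out, ih]; rfl

lemma concat_ok {m : ℕ} {x : PathDat Q × PathDat Q} (hx : BGmem Q R m x) :
    Ok Q (concatP Q x) := by
  obtain ⟨⟨u, as⟩, ⟨v, gs⟩⟩ := x
  obtain ⟨hB, hG, hlen, hap1, hap2⟩ := hx
  constructor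
  · show List.Chain' _ (gs ++ as)
    rw [List.Chain', List.isChain_append]
    refine ⟨hG.1.1, hB.1.1, ?_⟩
    intro e he y hy
    rw [Option.mem_def] at he
    have h1 : ptgt Q (v, gs) = Q.tgt e := ptgt_of_getLast? he
    have h2 : Q.src y = u := hB.1.2 y hy
    rw [← h1, h2]
    exact hap1.symm
  · intro e he
    rcases gs with _ | ⟨g, gt⟩
    · show Q.src e = v
      rw [hB.1.2 e he]
      exact hap1
    · show Q.src e = v
      simp only [concatP, List.cons_append, List.head?_cons, Option.mem_def,
        Option.some.injEq] at he
      subst he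
      exact hG.1.2 g rfl

lemma HB_mem_Wsp {c : PathDat Q} (m : ℕ) (x : BGt Q R m)
    (hrot : RotEquiv Q (concatP Q x.val) c) : HB k Q R m x ∈ Wsp k Q R c (m + 1) := by
  obtain ⟨⟨⟨u, as⟩, ⟨v, gs⟩⟩, hmem⟩ := x
  rcases List.eq_nil_or_concat as with rfl | ⟨as2, a, has⟩
  · have hid : Hraw Q (((u, ([] : List Q.A)), (v, gs)) : PathDat Q × PathDat Q)
        = ((u, []), (v, gs)) := rfl
    have hbad : ¬ BGmem Q R (m + 1) (((u, ([] : List Q.A)), (v, gs)) :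
        PathDat Q × PathDat Q) := by
      intro hb
      have h1 := hb.2.2.1
      have h2 := hmem.2.2.1
      simp only [plen_mk] at h1 h2
      omega
    rw [HB, hid, bw_neg _ hbad, smul_zero]
    exact zero_mem _
  · simp only [List.concat_eq_append] at has
    subst has
    by_cases h : BGmem Q R (m + 1) (Hraw Q ((u, as2 ++ [a]), (v, gs)))
    · rw [HB, bw_pos _ h]
      refine Submodule.smul_mem _ _ (Submodule.subset_span ⟨⟨_, h⟩, ?_, rfl⟩)
      show RotEquiv Q (concatP Q (Hraw Q ((u, as2 ++ [a]), (v, gs)))) c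
      rw [Hraw_concat u as2 a (v, gs)]
      have heq : concatP Q (((u, as2), (Q.src a, a :: gs)) : PathDat Q × PathDat Q)
          = rotP Q (concatP Q (((u, as2 ++ [a]), (v, gs)) : PathDat Q × PathDat Q)) := by
        show (Q.src a, (a :: gs) ++ as2) = rotP Q (v, gs ++ (as2 ++ [a]))
        rw [show gs ++ (as2 ++ [a]) = (gs ++ as2) ++ [a] by simp, rotP_concat]
        rfl
      rw [heq]
      exact rotEquiv_rotP _ c (concat_ok hmem) (by simp [concatP]) hrot
    · rw [HB, bw_neg _ h, smul_zero]
      exact zero_mem _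

lemma Hmap_mem_Wsp {c : PathDat Q} (m : ℕ) {z : Chn k Q R m} (hz : z ∈ Wsp k Q R c m) :
    Hmap k Q R m z ∈ Wsp k Q R c (m + 1) := by
  have hle : Wsp k Q R c m ≤
      Submodule.comap (Hmap k Q R m) (Wsp k Q R c (m + 1)) := by
    rw [Wsp, Submodule.span_le]
    rintro _ ⟨x, hrot, rfl⟩
    show Hmap k Q R m (Finsupp.single x 1) ∈ Wsp k Q R c (m + 1)
    rw [Hmap_single]
    exact HB_mem_Wsp m x hrot
  exact hle hz

lemma exact_Wsp0 {c : PathDat Q} (hmixc : MixedP Q R c) {z : Chn k Q R 0}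
    (hz : z ∈ Wsp k Q R c 0) : bd k Q R 0 (Hmap k Q R 0 z) = z := by
  have hle : Wsp k Q R c 0 ≤
      LinearMap.eqLocus (bd k Q R 0 ∘ₗ Hmap k Q R 0) LinearMap.id := by
    rw [Wsp, Submodule.span_le]
    rintro _ ⟨x, hrot, rfl⟩
    show (bd k Q R 0 ∘ₗ Hmap k Q R 0) (Finsupp.single x 1) = LinearMap.id (Finsupp.single x 1)
    rw [LinearMap.comp_apply, Hmap_single, core0 x (mixedP_rot hmixc hrot), LinearMap.id_apply]
  exact hle hz

lemma exact_WspS {c : PathDat Q} (hmixc : MixedP Q R c) (m : ℕ) {z : Chn k Q R (m + 1)}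
    (hz : z ∈ Wsp k Q R c (m + 1)) :
    bd k Q R (m + 1) (Hmap k Q R (m + 1) z) + Hmap k Q R m (bd k Q R m z) = z := by
  have hle : Wsp k Q R c (m + 1) ≤
      LinearMap.eqLocus (bd k Q R (m + 1) ∘ₗ Hmap k Q R (m + 1) + Hmap k Q R m ∘ₗ bd k Q R m)
        LinearMap.id := by
    rw [Wsp, Submodule.span_le]
    rintro _ ⟨x, hrot, rfl⟩
    show (bd k Q R (m + 1) ∘ₗ Hmap k Q R (m + 1) + Hmap k Q R m ∘ₗ bd k Q R m)
        (Finsupp.single x 1) = LinearMap.id (Finsupp.single x 1)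
    rw [LinearMap.add_apply, LinearMap.comp_apply, LinearMap.comp_apply, Hmap_single,
      bd_single, coreS m x (mixedP_rot hmixc hrot), LinearMap.id_apply]
  exact hle hz

end Final

/-- Let `(Q, R)` be a quadratic monomial presentation. For
every circuit `C` (given by a cycle `c`) that is neither complete nor
cocomplete, the subcomplex `k(B ⊙ Γ)_C` is exact in all degrees. For a vertex
`e`, the homology of `k(B ⊙ Γ)_{e}` is one-dimensional, concentrated in degree
`0` and spanned by `(e, e)`. -/
theorem homology_of_other_circuits (k : Type) [Field k] (Q : Quiv)
    (R : Set (Q.A × Q.A)) (hq : IsQuadMon Q R) :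
    (∀ c : PathDat Q, IsCycle Q c → ¬Complete Q R c → ¬Cocomplete Q R c →
      ∀ m : ℕ, WZ k Q R c m ≤ WB k Q R c m) ∧
    (∀ e : Q.V,
      SubHomSpannedBy k Q R (e, []) 0 (bw k Q R 0 ((e, []), (e, []))) ∧
      ∀ m : ℕ, WZ k Q R (e, []) (m + 1) ≤ WB k Q R (e, []) (m + 1)) := by
  constructor
  · -- Part 1 : nontrivial circuits, neither complete nor cocomplete
    intro c hc hcomp hcocomp m z hz
    have hmixc : MixedP Q R c := mixedP_of_cycle hc hcomp hcocomp
    obtain ⟨hz1, hz2⟩ := Submodule.mem_inf.mp hz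
    cases m with
    | zero =>
      exact Submodule.mem_map.mpr
        ⟨Hmap k Q R 0 z, Hmap_mem_Wsp 0 hz2, exact_Wsp0 hmixc hz2⟩
    | succ m' =>
      have hker : bd k Q R m' z = 0 := hz1
      refine Submodule.mem_map.mpr ⟨Hmap k Q R (m' + 1) z, Hmap_mem_Wsp _ hz2, ?_⟩
      have h := exact_WspS hmixc m' hz2
      rw [hker, map_zero, add_zero] at h
      exact h
  · -- Part 2 : vertices
    intro e
    have hmem0 : BGmem Q R 0 (((e, []), (e, [])) : PathDat Q × PathDat Q) := by
      refine ⟨⟨⟨List.isChain_nil, ?_⟩, List.isChain_nil⟩,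
        ⟨⟨List.isChain_nil, ?_⟩, List.isChain_nil⟩, rfl, rfl, rfl⟩
      all_goals intro a ha; simp at ha
    set x0 : BGt Q R 0 := ⟨((e, []), (e, [])), hmem0⟩ with hx0
    have hbw : bw k Q R 0 ((e, []), (e, [])) = Finsupp.single x0 1 := bw_pos 0 hmem0
    have hWsp1 : ∀ m : ℕ, Wsp k Q R ((e, []) : PathDat Q) (m + 1) ≤ ⊥ := by
      intro m
      rw [Wsp, Submodule.span_le]
      rintro _ ⟨x, hrot, rfl⟩
      exfalso
      obtain ⟨i, hi⟩ := hrot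
      have h0 : (concatP Q x.val).2.length = 0 := by
        rw [← length_rotI (Q := Q) i (concatP Q x.val), hi]
        rfl
      have hplen := x.2.2.2.1
      simp only [concatP, List.length_append, plen] at h0 hplen
      omega
    refine ⟨⟨?_, ?_, ?_⟩, ?_⟩
    · -- membership in cycles of the subcomplex
      refine Submodule.mem_inf.mpr ⟨Submodule.mem_top, ?_⟩
      rw [hbw]
      exact mem_Wsp_single 0 x0 ⟨0, rfl⟩
    · -- not a boundary
      intro hmem
      obtain ⟨y, hy, hbd⟩ := Submodule.mem_map.mp hmem
      have hy0 : y = 0 := by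
        have := hWsp1 0 hy
        simpa using this
      rw [hy0, map_zero, hbw] at hbd
      exact (one_ne_zero : (1 : k) ≠ 0) (by simpa [Finsupp.single_eq_zero] using hbd.symm)
    · -- spans the degree-0 homology
      intro z hz
      obtain ⟨hz1, hz2⟩ := Submodule.mem_inf.mp hz
      have hle : Wsp k Q R ((e, []) : PathDat Q) 0 ≤
          Submodule.span k {Finsupp.single x0 (1 : k)} := by
        rw [Wsp, Submodule.span_le]
        rintro _ ⟨x, hrot, rfl⟩
        obtain ⟨⟨⟨u, as⟩, ⟨v, gs⟩⟩, hxm⟩ := x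
        obtain ⟨i, hi⟩ := hrot
        have h0 : (concatP Q (((u, as), (v, gs)) : PathDat Q × PathDat Q)).2.length = 0 := by
          rw [← length_rotI (Q := Q) i _, hi]
          rfl
        simp only [concatP, List.length_append] at h0
        have hgs : gs = [] := List.length_eq_zero_iff.mp (by omega)
        have has : as = [] := List.length_eq_zero_iff.mp (by omega)
        subst hgs
        subst has
        have hconc : concatP Q (((u, []), (v, [])) : PathDat Q × PathDat Q) = (v, []) := rfl
        rw [hconc, rotI_nil] at hi
        have hv : v = e := congrArg Prod.fst hi
        have hu : u = v := hxm.2.2.2.1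
        have hxeq : (⟨((u, []), (v, [])), hxm⟩ : BGt Q R 0) = x0 := by
          rw [hx0]
          refine Subtype.ext ?_
          show (((u, []), (v, [])) : PathDat Q × PathDat Q) = ((e, []), (e, []))
          rw [hu, hv]
        rw [hxeq]
        exact Submodule.mem_span_singleton_self _
      obtain ⟨t, ht⟩ := Submodule.mem_span_singleton.mp (hle hz2)
      refine ⟨t, ?_⟩
      rw [hbw, ← ht, sub_self]
      exact zero_mem _
    · -- higher homology at a vertex vanishes
      intro m z hz
      obtain ⟨hz1, hz2⟩ := Submodule.mem_inf.mp hz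
      have hz0 : z = 0 := by
        have := hWsp1 m hz2
        simpa using this
      rw [hz0]
      exact zero_mem _

end GentleTT
end
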